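/- arXiv:1106.0120 — 5 statements merged into one kernel-verified Lean document; each statement's English description precedes it below -/
import Mathlib

section
/- There is a constant k_0 > 0 such that for all integers k ≥ k_0 and all sequences m = m(n) with m/n ≤ 2^k·ln 2, the random formula Φ = Φ_k(n,m) has the following property with high probability: for every set U ⊆ V of variables with |U| ≤ n/k, the number of clause indices i ∈ [m] with N(Φ_i) ⊆ U is at most 1.1·|U|/k. -/
open Finset Nat
open scoped Classical

set_option maxHeartbeats 1000000

/-- A `k`-SAT formula with `m` clauses over variables `Fin n`: each clause is an ordered
`k`-tuple of literals, a literal being a pair of a variable and a sign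
(`true` = positive occurrence, `false` = negated occurrence). -/
abbrev KFormula (n m k : ℕ) := Fin m → Fin k → Fin n × Bool

/-- The probability, under the uniform distribution on `k`-SAT formulas with `m` clauses
over `n` variables, of the event `P`. -/
noncomputable def probOf (n m k : ℕ) (P : KFormula n m k → Prop) : ℝ :=
  ((Finset.univ.filter fun Φ : KFormula n m k => P Φ).card : ℝ) /
    (Fintype.card (KFormula n m k) : ℝ)

/-- The set `N(Φ_i)` of variables occurring in clause `i`. -/
def clauseVars {n m k : ℕ} (Φ : KFormula n m k) (i : Fin m) : Finset (Fin n) :=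
  Finset.image (fun j => (Φ i j).1) Finset.univ


lemma pow_self_le (t : ℕ) : (t : ℝ)^t ≤ 3^t * (t ! : ℝ) := by
  induction t with
  | zero => simp
  | succ t ih =>
    rcases Nat.eq_zero_or_pos t with h | h
    · subst h; norm_num
    have h1 : ((t:ℝ)+1)^t ≤ 3 * (t:ℝ)^t := by
      have ht : (0:ℝ) < t := by exact_mod_cast h
      have : ((t:ℝ)+1)^t = ((1 + 1/t)^t) * (t:ℝ)^t := by
        rw [← mul_pow]; congr 1; field_simp
      rw [this]
      have h2 : (1 + 1/(t:ℝ))^t ≤ Real.exp (1/t) ^ t := by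
        apply pow_le_pow_left₀ (by positivity)
        linarith [Real.add_one_le_exp (1/(t:ℝ))]
      have h3 : Real.exp (1/(t:ℝ)) ^ t = Real.exp 1 := by
        rw [← Real.exp_nat_mul]; congr 1; field_simp
      have h4 : Real.exp 1 ≤ 3 := by
        have := Real.exp_one_lt_d9; linarith
      have : (1 + 1/(t:ℝ))^t ≤ 3 := by rw [h3] at h2; linarith
      nlinarith [pow_nonneg (le_of_lt ht) t]
    have hf : ((t+1)! : ℝ) = ((t:ℝ)+1) * (t ! : ℝ) := by
      rw [Nat.factorial_succ]; push_cast; ring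
    push_cast
    rw [pow_succ]
    calc ((t:ℝ)+1)^t * ((t:ℝ)+1) ≤ 3 * (t:ℝ)^t * ((t:ℝ)+1) := by
          apply mul_le_mul_of_nonneg_right h1 (by positivity)
      _ ≤ 3 * (3^t * (t ! : ℝ)) * ((t:ℝ)+1) := by
          apply mul_le_mul_of_nonneg_right (by linarith) (by positivity)
      _ = 3^(t+1) * (((t:ℝ)+1) * (t ! : ℝ)) := by ring
      _ = 3^(t+1) * ((t+1)! : ℝ) := by rw [hf]

lemma choose_le_real (a b : ℕ) (hb : 0 < b) : (a.choose b : ℝ) ≤ (3*a/b)^b := by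
  have h1 : (a.choose b : ℝ) * (b:ℝ)^b ≤ (3*(a:ℝ))^b := by
    calc (a.choose b : ℝ) * (b:ℝ)^b ≤ (a.choose b : ℝ) * (3^b * (b ! : ℝ)) := by
          apply mul_le_mul_of_nonneg_left (pow_self_le b) (by positivity)
      _ = 3^b * ((a.choose b) * (b !) : ℕ) := by push_cast; ring
      _ ≤ 3^b * ((a:ℝ)^b) := by
          apply mul_le_mul_of_nonneg_left _ (by positivity)
          have : a.choose b * b ! = a.descFactorial b := by
            rw [Nat.descFactorial_eq_factorial_mul_choose]; ring
          rw [this]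
          exact_mod_cast Nat.descFactorial_le_pow a b
      _ = (3*(a:ℝ))^b := by rw [mul_pow]
  have hbp : (0:ℝ) < (b:ℝ)^b := by positivity
  rw [div_pow, le_div_iff₀ (by positivity)]
  exact h1

lemma knum {k : ℕ} (hk : 12^11 ≤ k) : 8 * 6^k ≤ k^((k-22)/11) := by
  set c := (k-22)/11 with hc
  have hk' : 2176782336 ≤ k := le_trans (by norm_num) hk
  have h1 : k - 22 < (c+1)*11 := by omega
  have h2 : k - 32 ≤ 11*c := by omega
  have key : (8 * 6^k)^11 ≤ (k^c)^11 := by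
    have e1 : (8 * 6^k)^11 = 2^33 * 6^(11*k) := by
      rw [mul_pow, ← pow_mul, Nat.mul_comm k 11]
      norm_num
    have e2 : (k^c)^11 = k^(11*c) := by rw [← pow_mul, Nat.mul_comm]
    rw [e1, e2]
    calc 2^33 * 6^(11*k) ≤ 6^(k - 384) * 6^(11*k) := by
          apply Nat.mul_le_mul_right
          calc (2:ℕ)^33 ≤ 6^33 := Nat.pow_le_pow_left (by norm_num) _
            _ ≤ 6^(k-384) := Nat.pow_le_pow_right (by norm_num) (by omega)
      _ = 6^(12*(k - 32)) := by rw [← pow_add]; congr 1; omega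
      _ = (6^12)^(k-32) := by rw [pow_mul]
      _ ≤ k^(k-32) := Nat.pow_le_pow_left (by omega) _
      _ ≤ k^(11*c) := Nat.pow_le_pow_right (by omega) h2
  exact le_of_pow_le_pow_left₀ (by norm_num) (Nat.zero_le _) key

lemma knum2 {k : ℕ} (hk : 12^11 ≤ k) : 36 * k * 2^k ≤ k^((k-22)/11) := by
  refine le_trans ?_ (knum hk)
  have h3 : k - 2 < 3^(k-2) := Nat.lt_pow_self (by norm_num)
  have e : 8 * 6^k = 8 * 2^k * 3^k := by rw [mul_assoc, ← mul_pow]; norm_num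
  rw [e]
  have h4 : 36 * k ≤ 8 * 3^k := by
    have : 3^k = 9 * 3^(k-2) := by
      rw [show (9:ℕ) = 3^2 by norm_num, ← pow_add]
      congr 1; omega
    rw [this]
    have h5 : k - 2 + 1 ≤ 3^(k-2) := h3
    calc 36 * k ≤ 72 * (k - 2 + 1) := by omega
      _ ≤ 72 * 3^(k-2) := Nat.mul_le_mul_left _ h5
      _ = 8 * (9 * 3^(k-2)) := by ring
  calc 36 * k * 2^k ≤ 8 * 3^k * 2^k := Nat.mul_le_mul_right _ h4
    _ = 8 * 2^k * 3^k := by ring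

lemma card_E (n m k : ℕ) (T : Finset (Fin m)) (U : Finset (Fin n)) :
    (Finset.univ.filter fun Φ : KFormula n m k => ∀ i ∈ T, ∀ j, (Φ i j).1 ∈ U).card
      = ((U.card * 2)^k)^T.card * ((n * 2)^k)^(m - T.card) := by
  classical
  set inner : Finset (Fin k → Fin n × Bool) :=
    Fintype.piFinset (fun _ => U ×ˢ (Finset.univ : Finset Bool)) with hinnerdef
  have hinner : inner.card = (U.card * 2)^k := by
    rw [hinnerdef, Fintype.card_piFinset_const, Finset.card_product]
    simp
  have hset : (Finset.univ.filter fun Φ : KFormula n m k => ∀ i ∈ T, ∀ j, (Φ i j).1 ∈ U)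
      = Fintype.piFinset (fun i => if i ∈ T then inner else Finset.univ) := by
    ext Φ
    simp only [Finset.mem_filter, Fintype.mem_piFinset, Finset.mem_univ, true_and]
    constructor
    · intro h i
      by_cases hi : i ∈ T
      · rw [if_pos hi]
        simp only [hinnerdef, Fintype.mem_piFinset, Finset.mem_product, Finset.mem_univ,
          and_true]
        exact h i hi
      · rw [if_neg hi]; exact Finset.mem_univ _
    · intro h i hi j
      have := h i
      rw [if_pos hi] at this
      simp only [hinnerdef, Fintype.mem_piFinset, Finset.mem_product, Finset.mem_univ,
        and_true] at this
      exact this j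
  rw [hset, Fintype.card_piFinset]
  have huniv : (Finset.univ : Finset (Fin k → Fin n × Bool)).card = (n*2)^k := by
    rw [Finset.card_univ]
    simp [Fintype.card_fun]
  calc (∏ i : Fin m, (if i ∈ T then inner else Finset.univ).card)
      = ∏ i : Fin m, (if i ∈ T then (U.card * 2)^k else (n*2)^k) := by
        apply Finset.prod_congr rfl
        intro i _
        by_cases hi : i ∈ T <;> simp [hi, hinner, huniv]
    _ = (∏ i ∈ Finset.univ \ T, (if i ∈ T then (U.card * 2)^k else (n*2)^k)) *
        (∏ i ∈ T, (if i ∈ T then (U.card * 2)^k else (n*2)^k)) :=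
        (Finset.prod_sdiff (Finset.subset_univ T)).symm
    _ = ((U.card * 2)^k)^T.card * ((n * 2)^k)^(m - T.card) := by
        rw [Finset.prod_congr rfl (fun i hi => if_neg (Finset.mem_sdiff.mp hi).2),
          Finset.prod_congr rfl (fun i hi => if_pos hi), Finset.prod_const, Finset.prod_const,
          Finset.card_sdiff_of_subset (Finset.subset_univ T), Finset.card_univ, Fintype.card_fin,
          mul_comm]

/-- the witness size -/
def wfn (n k t : ℕ) : ℕ := min (n / k) ((10 * (k * t)) / 11)

lemma bad_card_le (n m k : ℕ) (hk : 1 ≤ k) :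
    ((Finset.univ.filter fun Φ : KFormula n m k =>
        ¬ (∀ U : Finset (Fin n), (U.card : ℝ) ≤ n / k →
            ((Finset.univ.filter fun i : Fin m => clauseVars Φ i ⊆ U).card : ℝ)
              ≤ 1.1 * U.card / k)).card)
      ≤ ∑ t ∈ Finset.Icc 1 m, (m.choose t * n.choose (wfn n k t)) *
          (((wfn n k t * 2)^k)^t * ((n * 2)^k)^(m - t)) := by
  classical
  set E : Finset (Fin m) × Finset (Fin n) → Finset (KFormula n m k) :=
    fun p => Finset.univ.filter fun Φ => ∀ i ∈ p.1, ∀ j, (Φ i j).1 ∈ p.2 with hE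
  have hsub : (Finset.univ.filter fun Φ : KFormula n m k =>
      ¬ (∀ U : Finset (Fin n), (U.card : ℝ) ≤ n / k →
          ((Finset.univ.filter fun i : Fin m => clauseVars Φ i ⊆ U).card : ℝ)
            ≤ 1.1 * U.card / k)).card
      ≤ ((Finset.Icc 1 m).biUnion (fun t =>
          ((Finset.univ.powersetCard t ×ˢ Finset.univ.powersetCard (wfn n k t)).biUnion
            E))).card := by
    apply Finset.card_le_card
    intro Φ hΦ
    rw [Finset.mem_filter] at hΦ
    obtain ⟨-, hbad⟩ := hΦ
    push_neg at hbad
    obtain ⟨U, hU, hcount⟩ := hbad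
    set T : Finset (Fin m) := Finset.univ.filter (fun i => clauseVars Φ i ⊆ U) with hT
    set t := T.card with htdef
    have hkR0 : (0:ℝ) < k := by exact_mod_cast hk
    have hU0 : (0:ℝ) ≤ 1.1 * U.card / k := by positivity
    have ht1 : 1 ≤ t := by
      have h0 : (0:ℝ) < (t:ℝ) := lt_of_le_of_lt hU0 hcount
      exact_mod_cast h0
    have htm : t ≤ m := le_trans (Finset.card_le_card (Finset.subset_univ T))
      (by simp)
    set W : Finset (Fin n) := T.biUnion (fun i => clauseVars Φ i) with hW
    have hWU : W ⊆ U := by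
      rw [hW]
      apply Finset.biUnion_subset.mpr
      intro i hi
      exact (Finset.mem_filter.mp hi).2
    have hWcard : W.card ≤ U.card := Finset.card_le_card hWU
    have hUk : U.card * k ≤ n := by
      have : (U.card : ℝ) * k ≤ n := by
        rw [← le_div_iff₀ hkR0]
        exact hU
      exact_mod_cast this
    have hWnk : W.card ≤ n / k := Nat.le_div_iff_mul_le (by omega) |>.mpr
      ((Nat.mul_le_mul_right k hWcard).trans hUk)
    have hcount' : 11 * U.card < 10 * (k * t) := by
      have h1 : 1.1 * (U.card:ℝ) / k < t := hcount
      have h2 : 1.1 * (U.card:ℝ) < t * k := by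
        rw [div_lt_iff₀ hkR0] at h1
        exact h1
      have h3 : (11:ℝ) * U.card < 10 * ((k:ℝ) * t) := by norm_num at h2 ⊢; nlinarith
      exact_mod_cast h3
    have hW10 : W.card ≤ (10 * (k * t)) / 11 :=
      Nat.le_div_iff_mul_le (by norm_num) |>.mpr (by omega)
    have hWw : W.card ≤ wfn n k t := le_min hWnk hW10
    have hwn : wfn n k t ≤ n := le_trans (min_le_left _ _) (Nat.div_le_self n k)
    obtain ⟨U', hWU', hU'univ, hU'card⟩ :=
      Finset.exists_subsuperset_card_eq (Finset.subset_univ W) hWw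
        (by simpa using hwn)
    rw [Finset.mem_biUnion]
    refine ⟨t, by rw [Finset.mem_Icc]; omega, ?_⟩
    rw [Finset.mem_biUnion]
    refine ⟨(T, U'), ?_, ?_⟩
    · rw [Finset.mem_product]
      constructor
      · rw [Finset.mem_powersetCard]
        exact ⟨Finset.subset_univ T, rfl⟩
      · rw [Finset.mem_powersetCard]
        exact ⟨Finset.subset_univ U', hU'card⟩
    · rw [hE]
      simp only [Finset.mem_filter, Finset.mem_univ, true_and]
      intro i hi j
      apply hWU'
      rw [hW]
      apply Finset.mem_biUnion.mpr ⟨i, hi, ?_⟩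
      rw [clauseVars]
      exact Finset.mem_image.mpr ⟨j, Finset.mem_univ j, rfl⟩
  refine le_trans hsub (le_trans (Finset.card_biUnion_le) ?_)
  apply Finset.sum_le_sum
  intro t ht
  refine le_trans (Finset.card_biUnion_le) ?_
  have hconst : ∀ p ∈ Finset.univ.powersetCard t ×ˢ
      Finset.univ.powersetCard (wfn n k t),
      (E p).card = ((wfn n k t * 2)^k)^t * ((n * 2)^k)^(m - t) := by
    intro p hp
    rw [Finset.mem_product, Finset.mem_powersetCard, Finset.mem_powersetCard] at hp
    rw [hE]
    rw [card_E n m k p.1 p.2, hp.1.2, hp.2.2]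
  rw [Finset.sum_congr rfl hconst, Finset.sum_const, Finset.card_product,
    Finset.card_powersetCard, Finset.card_powersetCard, Finset.card_univ,
    Finset.card_univ, Fintype.card_fin, Fintype.card_fin, smul_eq_mul]

lemma term_bound (k n m t w : ℕ)
    (hk : 12^11 ≤ k)
    (ht : 1 ≤ t)
    (hw1 : 1 ≤ w)
    (hwk : w * k ≤ n)
    (hw10 : 11 * w ≤ 10 * (k * t))
    (hm : (m:ℝ) ≤ (n:ℝ) * 2^k * Real.log 2) :
    (m.choose t : ℝ) * (n.choose w : ℝ) * ((w:ℝ)/n)^(k*t)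
      ≤ (1/2)^t * ((k:ℝ)^2/n + (1/2)^(n/k)) := by
  have hk1 : 1 ≤ k := le_trans (by norm_num) hk
  have hn1 : 1 ≤ n := by
    have : 1*1 ≤ w*k := Nat.mul_le_mul hw1 hk1
    omega
  have hkR : (1:ℝ) ≤ k := by exact_mod_cast hk1
  have hnR : (0:ℝ) < n := by exact_mod_cast hn1
  have hwR : (0:ℝ) < w := by exact_mod_cast hw1
  have htR : (1:ℝ) ≤ t := by exact_mod_cast ht
  have htR0 : (0:ℝ) < t := by linarith
  have hkR0 : (0:ℝ) < k := by linarith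
  have hkne : (k:ℝ) ≠ 0 := ne_of_gt hkR0
  set c := (k-22)/11 with hcdef
  have h6k : (6:ℝ)^k = 2^k * 3^k := by rw [← mul_pow]; norm_num
  have hcR : (8:ℝ) * (2^k*3^k) ≤ (k:ℝ)^c := by
    rw [← h6k]; exact_mod_cast knum hk
  have hc2R : (36:ℝ) * k * 2^k ≤ (k:ℝ)^c := by exact_mod_cast knum2 hk
  have hKinv1 : (1:ℝ)/k ≤ 1 := by rw [div_le_one hkR0]; exact hkR
  have hKinvc : ((1:ℝ)/k)^c = 1/(k:ℝ)^c := by rw [div_pow, one_pow]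
  set u : ℝ := (w:ℝ)/n with hudef
  have hu0 : 0 < u := by positivity
  have hu1K : u ≤ 1/k := by
    rw [hudef, div_le_div_iff₀ hnR hkR0, one_mul]
    exact_mod_cast hwk
  have hu1 : u ≤ 1 := le_trans hu1K hKinv1
  have hwkt : w ≤ k * t := by
    have h22 : 10 * (k*t) ≤ 11 * (k*t) := by omega
    omega
  set d := k * t - w with hddef
  have hd : w + d = k * t := by omega
  have h11d : k * t ≤ 11 * d := by omega
  have hct22 : 11 * c + 22 ≤ k := by omega
  have hctkt : 11*(c*t) + 22*t ≤ k*t := by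
    have h1 : (11*c+22)*t ≤ k*t := Nat.mul_le_mul_right t hct22
    calc 11*(c*t) + 22*t = (11*c+22)*t := by ring
      _ ≤ k*t := h1
  have hctd : c * t ≤ d := by omega
  have hlog : Real.log 2 ≤ 11/15 := by
    have := Real.log_two_lt_d9
    linarith
  have hlogpos : (0:ℝ) < Real.log 2 := Real.log_pos (by norm_num)
  have hm0 : (0:ℝ) ≤ m := Nat.cast_nonneg m
  have step1 : (m.choose t : ℝ) * (n.choose w : ℝ) * u^(k*t)
      ≤ (3*m/t)^t * ((3*n/w)^w * u^(k*t)) := by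
    rw [← mul_assoc]
    apply mul_le_mul_of_nonneg_right _ (by positivity)
    apply mul_le_mul (choose_le_real m t ht) (choose_le_real n w hw1)
      (Nat.cast_nonneg _) (by positivity)
  have step2 : (3*(n:ℝ)/w)^w * u^(k*t) = 3^w * u^d := by
    rw [← hd, pow_add, ← mul_assoc, ← mul_pow]
    congr 2
    rw [hudef]
    field_simp
  have half_nk : (0:ℝ) ≤ (1/2:ℝ)^(n/k) := by positivity
  have hKc_pos : (0:ℝ) < (k:ℝ)^c := by positivity
  rcases le_or_gt (k*t) n with hA | hB
  -- CASE A : k*t ≤ n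
  · have hAR : (k:ℝ) * t ≤ n := by exact_mod_cast hA
    have h2td : 2*t ≤ d := by
      have : 22*t ≤ k*t := by omega
      omega
    set e := d - 2*t with hedef
    have hecle : c * t ≤ e := by omega
    have hue : u^d ≤ (1/(k:ℝ))^(c*t) * u^(2*t) := by
      have hsplit : u^d = u^e * u^(2*t) := by rw [← pow_add]; congr 1; omega
      rw [hsplit]
      apply mul_le_mul_of_nonneg_right _ (by positivity)
      calc u^e ≤ (1/(k:ℝ))^e := pow_le_pow_left₀ (le_of_lt hu0) hu1K e
        _ ≤ (1/(k:ℝ))^(c*t) := pow_le_pow_of_le_one (by positivity) hKinv1 hecle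
    have h3w : (3:ℝ)^w ≤ 3^(k*t) := pow_le_pow_right₀ (by norm_num) hwkt
    have hwle : (w:ℝ) ≤ (10/11) * ((k:ℝ)*t) := by
      have : (11:ℝ) * w ≤ 10 * ((k:ℝ)*t) := by exact_mod_cast hw10
      linarith
    have hu_le : u ≤ (10/11) * ((k:ℝ)*t) / n := by
      rw [hudef]
      gcongr
    have hu_le' : u ≤ (k:ℝ)*t/n := by
      calc u ≤ (10/11) * ((k:ℝ)*t) / n := hu_le
        _ ≤ 1 * ((k:ℝ)*t) / n := by gcongr; norm_num
        _ = (k:ℝ)*t/n := by rw [one_mul]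
    have hf1 : (3*(m:ℝ)/t) * u ≤ 2*(k:ℝ)*2^k := by
      have hkk : (0:ℝ) < (k:ℝ)*2^k := by positivity
      calc (3*(m:ℝ)/t) * u ≤ (3*((n:ℝ) * 2^k * Real.log 2)/t) * ((10/11) * ((k:ℝ)*t) / n) := by
            gcongr
        _ = (30/11) * Real.log 2 * ((k:ℝ)*2^k) := by
            field_simp
            ring
        _ ≤ (30/11) * (11/15) * ((k:ℝ)*2^k) := by
            apply mul_le_mul_of_nonneg_right _ (le_of_lt hkk)
            apply mul_le_mul_of_nonneg_left hlog (by norm_num)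
        _ = 2 * ((k:ℝ)*2^k) := by norm_num
        _ = 2*(k:ℝ)*2^k := by ring
    obtain ⟨B, hBdef, hBpos⟩ : ∃ B : ℝ, B = 2*(2:ℝ)^k*3^k*(1/(k:ℝ))^c ∧ 0 < B :=
      ⟨_, rfl, by positivity⟩
    have hbr : 2*B ≤ 1/2 := by
      rw [hBdef, hKinvc]
      rw [show 2*(2*(2:ℝ)^k*3^k*(1/(k:ℝ)^c)) = (4*(2^k*3^k))*(1/(k:ℝ)^c) by ring,
        mul_one_div, div_le_div_iff₀ hKc_pos (by norm_num : (0:ℝ) < 2)]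
      calc 4*((2:ℝ)^k*3^k)*2 = 8*(2^k*3^k) := by ring
        _ ≤ (k:ℝ)^c := hcR
        _ = 1 * (k:ℝ)^c := (one_mul _).symm
    -- assemble case A
    have main : (3*(m:ℝ)/t)^t * (3^w * u^d) ≤ ((k:ℝ)^2/n) * (2*B)^t := by
      have hb0 : (0:ℝ) ≤ 3*(m:ℝ)/t := by positivity
      have hKt : (k:ℝ)^t = (k:ℝ)^(t-1) * k := by
        rw [← pow_succ]
        congr 1
        omega
      have ht2 : (t:ℝ) ≤ 2^t := by exact_mod_cast le_of_lt ((Nat.lt_two_pow_self (n := t)))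
      calc (3*(m:ℝ)/t)^t * (3^w * u^d)
          ≤ (3*(m:ℝ)/t)^t * (3^(k*t) * ((1/(k:ℝ))^(c*t) * u^(2*t))) := by
            apply mul_le_mul_of_nonneg_left _ (by positivity)
            calc (3:ℝ)^w * u^d ≤ 3^(k*t) * u^d := by
                  apply mul_le_mul_of_nonneg_right h3w (by positivity)
              _ ≤ 3^(k*t) * ((1/(k:ℝ))^(c*t) * u^(2*t)) := by
                  apply mul_le_mul_of_nonneg_left hue (by positivity)
        _ = ((3*(m:ℝ)/t) * 3^k * (1/(k:ℝ))^c * (u*u))^t := by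
            rw [pow_mul (3:ℝ), pow_mul (1/(k:ℝ)), pow_mul u]
            ring
        _ ≤ ((2*(k:ℝ)*2^k) * 3^k * (1/(k:ℝ))^c * u)^t := by
            apply pow_le_pow_left₀ (by positivity)
            calc (3*(m:ℝ)/t) * 3^k * (1/(k:ℝ))^c * (u*u)
                = ((3*(m:ℝ)/t) * u) * (3^k * (1/(k:ℝ))^c * u) := by ring
              _ ≤ (2*(k:ℝ)*2^k) * (3^k * (1/(k:ℝ))^c * u) := by
                  apply mul_le_mul_of_nonneg_right hf1 (by positivity)
              _ = (2*(k:ℝ)*2^k) * 3^k * (1/(k:ℝ))^c * u := by ring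
        _ = ((k:ℝ)*B)^t * u^t := by
            rw [← mul_pow]
            congr 1
            rw [hBdef]
            ring
        _ ≤ ((k:ℝ)*B)^t * (((k:ℝ)*t/n) * (1/(k:ℝ))^(t-1)) := by
            apply mul_le_mul_of_nonneg_left _ (by positivity)
            calc u^t = u * u^(t-1) := by
                  rw [← _root_.pow_succ']
                  congr 1
                  omega
              _ ≤ ((k:ℝ)*t/n) * (1/(k:ℝ))^(t-1) := by
                  apply mul_le_mul hu_le' (pow_le_pow_left₀ (le_of_lt hu0) hu1K _)
                    (by positivity) (by positivity)
        _ ≤ ((k:ℝ)*B)^t * (((k:ℝ)*2^t/n) * (1/(k:ℝ))^(t-1)) := by gcongr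
        _ = ((k:ℝ)^2/n) * (2*B)^t := by
            rw [mul_pow, mul_pow, hKt]
            field_simp
            rw [← mul_pow, mul_one_div_cancel hkne, one_pow]
    calc (m.choose t : ℝ) * (n.choose w : ℝ) * u^(k*t)
        ≤ (3*(m:ℝ)/t)^t * (3^w * u^d) := by rw [← step2]; exact step1
      _ ≤ ((k:ℝ)^2/n) * (2*B)^t := main
      _ ≤ ((k:ℝ)^2/n) * (1/2)^t := by
          apply mul_le_mul_of_nonneg_left _ (by positivity)
          exact pow_le_pow_left₀ (by positivity) hbr t
      _ ≤ (1/2)^t * ((k:ℝ)^2/n + (1/2)^(n/k)) := by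
          rw [mul_comm]
          apply mul_le_mul_of_nonneg_left _ (by positivity)
          linarith
  -- CASE B : n < k*t
  · have hBR : (n:ℝ) < (k:ℝ)*t := by exact_mod_cast hB
    have hB' : n < t*k := by rw [Nat.mul_comm t k]; exact hB
    have hnkt : n/k < t := (Nat.div_lt_iff_lt_mul (by omega)).mpr hB'
    have hwt : w ≤ t := by
      have h1 : w ≤ n/k := (Nat.le_div_iff_mul_le (by omega)).mpr hwk
      omega
    have hud : u^d ≤ (1/(k:ℝ))^(c*t) := by
      calc u^d ≤ (1/(k:ℝ))^d := pow_le_pow_left₀ (le_of_lt hu0) hu1K d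
        _ ≤ (1/(k:ℝ))^(c*t) := pow_le_pow_of_le_one (by positivity) hKinv1 hctd
    have h3w : (3:ℝ)^w ≤ 3^t := pow_le_pow_right₀ (by norm_num) hwt
    have hmt : 3*(m:ℝ)/t ≤ 3*(k:ℝ)*2^k := by
      rw [div_le_iff₀ htR0]
      calc 3*(m:ℝ) ≤ 3*((n:ℝ) * 2^k * Real.log 2) := by linarith
        _ ≤ 3*(((k:ℝ)*t) * 2^k * 1) := by
            have h2k : (0:ℝ) < (2:ℝ)^k := by positivity
            have hl1 : Real.log 2 ≤ 1 := by linarith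
            have : (n:ℝ) * 2^k * Real.log 2 ≤ ((k:ℝ)*t) * 2^k * 1 := by
              apply mul_le_mul _ hl1 (le_of_lt hlogpos) (by positivity)
              nlinarith
            linarith
        _ = 3*(k:ℝ)*2^k * t := by ring
    have hbrB : (3*(k:ℝ)*2^k) * 3 * (1/(k:ℝ))^c ≤ 1/4 := by
      rw [hKinvc, mul_one_div, div_le_div_iff₀ hKc_pos (by norm_num : (0:ℝ) < 4)]
      calc (3*(k:ℝ)*2^k) * 3 * 4 = 36*(k:ℝ)*2^k := by ring
        _ ≤ (k:ℝ)^c := hc2R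
        _ = 1 * (k:ℝ)^c := (one_mul _).symm
    have mainB : (3*(m:ℝ)/t)^t * (3^w * u^d) ≤ (1/4:ℝ)^t := by
      calc (3*(m:ℝ)/t)^t * (3^w * u^d)
          ≤ (3*(k:ℝ)*2^k)^t * (3^t * ((1/(k:ℝ))^c)^t) := by
            apply mul_le_mul (pow_le_pow_left₀ (by positivity) hmt t)
              _ (by positivity) (by positivity)
            rw [← pow_mul]
            apply mul_le_mul h3w hud (by positivity) (by positivity)
        _ = ((3*(k:ℝ)*2^k) * 3 * (1/(k:ℝ))^c)^t := by
            simp only [mul_pow, mul_assoc]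
        _ ≤ (1/4:ℝ)^t := pow_le_pow_left₀ (by positivity) hbrB t
    have hquart : (1/4:ℝ)^t ≤ (1/2:ℝ)^t * (1/2:ℝ)^(n/k) := by
      have h14 : (1/4:ℝ)^t = (1/2:ℝ)^t * (1/2:ℝ)^t := by
        rw [← mul_pow]; norm_num
      rw [h14]
      apply mul_le_mul_of_nonneg_left _ (by positivity)
      apply pow_le_pow_of_le_one (by norm_num) (by norm_num)
      omega
    calc (m.choose t : ℝ) * (n.choose w : ℝ) * u^(k*t)
        ≤ (3*(m:ℝ)/t)^t * (3^w * u^d) := by rw [← step2]; exact step1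
      _ ≤ (1/4:ℝ)^t := mainB
      _ ≤ (1/2:ℝ)^t * (1/2:ℝ)^(n/k) := hquart
      _ ≤ (1/2)^t * ((k:ℝ)^2/n + (1/2)^(n/k)) := by
          apply mul_le_mul_of_nonneg_left _ (by positivity)
          have : (0:ℝ) ≤ (k:ℝ)^2/n := by positivity
          linarith

lemma geom_sum_Icc (M : ℕ) : ∑ t ∈ Finset.Icc 1 M, (1/2:ℝ)^t ≤ 1 := by
  have : ∀ M : ℕ, ∑ t ∈ Finset.Icc 1 M, (1/2:ℝ)^t = 1 - (1/2)^M := by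
    intro M
    induction M with
    | zero => simp
    | succ M ih =>
      rw [Finset.sum_Icc_succ_top (by omega), ih]
      ring
  rw [this]
  have : (0:ℝ) ≤ (1/2:ℝ)^M := by positivity
  linarith

lemma main_bound (k n M : ℕ) (hk : 12^11 ≤ k) (hn : k ≤ n)
    (hM : (M:ℝ) ≤ (n:ℝ) * 2^k * Real.log 2) :
    1 - ((k:ℝ)^2/n + (1/2:ℝ)^(n/k)) ≤ probOf n M k (fun Φ =>
        ∀ U : Finset (Fin n), (U.card : ℝ) ≤ n / k →
          ((Finset.univ.filter fun i : Fin M => clauseVars Φ i ⊆ U).card : ℝ)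
            ≤ 1.1 * U.card / k) := by
  classical
  have hk1 : 1 ≤ k := le_trans (by norm_num) hk
  have hn1 : 1 ≤ n := le_trans hk1 hn
  have hnR : (0:ℝ) < n := by exact_mod_cast hn1
  have hDval : Fintype.card (KFormula n M k) = ((n*2)^k)^M := by
    rw [show ((n*2)^k)^M = (Fintype.card (Fin k → Fin n × Bool))^(Fintype.card (Fin M)) by
      simp [Fintype.card_fun]]
    exact Fintype.card_fun
  have hD0 : (0:ℝ) < (Fintype.card (KFormula n M k) : ℝ) := by
    rw [hDval]
    have : 0 < ((n*2)^k)^M := by positivity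
    exact_mod_cast this
  set Good : KFormula n M k → Prop := fun Φ =>
    ∀ U : Finset (Fin n), (U.card : ℝ) ≤ n / k →
      ((Finset.univ.filter fun i : Fin M => clauseVars Φ i ⊆ U).card : ℝ)
        ≤ 1.1 * U.card / k with hGood
  have hsplit : (Finset.univ.filter fun Φ : KFormula n M k => Good Φ).card
      + (Finset.univ.filter fun Φ : KFormula n M k => ¬ Good Φ).card
      = Fintype.card (KFormula n M k) := by
    rw [Finset.card_filter_add_card_filter_not, Finset.card_univ]
  -- bound the bad probability
  have hbadle : ((Finset.univ.filter fun Φ : KFormula n M k => ¬ Good Φ).card : ℝ)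
      / (Fintype.card (KFormula n M k) : ℝ)
      ≤ (k:ℝ)^2/n + (1/2:ℝ)^(n/k) := by
    have h1 : ((Finset.univ.filter fun Φ : KFormula n M k => ¬ Good Φ).card : ℝ)
        ≤ ∑ t ∈ Finset.Icc 1 M, ((M.choose t * n.choose (wfn n k t)) *
            (((wfn n k t * 2)^k)^t * ((n * 2)^k)^(M - t)) : ℕ) := by
      exact_mod_cast bad_card_le n M k hk1
    rw [div_le_iff₀ hD0]
    calc ((Finset.univ.filter fun Φ : KFormula n M k => ¬ Good Φ).card : ℝ)
        ≤ ∑ t ∈ Finset.Icc 1 M, ((M.choose t * n.choose (wfn n k t)) *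
            (((wfn n k t * 2)^k)^t * ((n * 2)^k)^(M - t)) : ℕ) := h1
      _ ≤ ((k:ℝ)^2/n + (1/2:ℝ)^(n/k)) * (Fintype.card (KFormula n M k) : ℝ) := ?_
    rw [hDval]
    push_cast
    have hterm : ∀ t ∈ Finset.Icc 1 M,
        (M.choose t : ℝ) * (n.choose (wfn n k t) : ℝ) *
          ((((wfn n k t : ℝ) * 2)^k)^t * (((n:ℝ) * 2)^k)^(M - t))
        ≤ (1/2:ℝ)^t * ((k:ℝ)^2/n + (1/2:ℝ)^(n/k)) * (((n:ℝ)*2)^k)^M := by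
      intro t htmem
      rw [Finset.mem_Icc] at htmem
      obtain ⟨ht1, htM⟩ := htmem
      have hwfn : wfn n k t = min (n / k) ((10 * (k * t)) / 11) := rfl
      set w := wfn n k t with hwdef
      have hw1 : 1 ≤ w := by
        rw [hwfn]
        apply le_min
        · exact (Nat.one_le_div_iff (by omega)).mpr hn
        · rw [Nat.le_div_iff_mul_le (by norm_num)]
          have : k * 1 ≤ k * t := Nat.mul_le_mul_left k ht1
          omega
      have hwk : w * k ≤ n := by
        rw [hwfn]
        calc min (n / k) ((10 * (k * t)) / 11) * k ≤ (n/k) * k :=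
              Nat.mul_le_mul_right k (min_le_left _ _)
          _ ≤ n := Nat.div_mul_le_self n k
      have hw10 : 11 * w ≤ 10 * (k * t) := by
        have h1 : w ≤ (10 * (k * t)) / 11 := by
          rw [hwfn]; exact min_le_right _ _
        have h2 := (Nat.le_div_iff_mul_le (by norm_num : 0 < 11)).mp h1
        omega
      have hkey : (((wfn n k t : ℝ) * 2)^k)^t * (((n:ℝ) * 2)^k)^(M - t)
          = ((w:ℝ)/n)^(k*t) * (((n:ℝ)*2)^k)^M := by
        rw [← hwdef, ← pow_mul, ← pow_mul, ← pow_mul]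
        rw [show k * M = k * t + k * (M - t) by
          rw [← Nat.mul_add]; congr 1; omega]
        rw [pow_add, ← mul_assoc]
        congr 1
        rw [← mul_pow]
        congr 1
        field_simp
      rw [hkey, ← mul_assoc]
      apply mul_le_mul_of_nonneg_right _ (by positivity)
      exact term_bound k n M t w hk ht1 hw1 hwk hw10 hM
    calc (∑ t ∈ Finset.Icc 1 M, (M.choose t : ℝ) * (n.choose (wfn n k t) : ℝ) *
            ((((wfn n k t:ℝ) * 2)^k)^t * (((n:ℝ) * 2)^k)^(M - t)))
        ≤ ∑ t ∈ Finset.Icc 1 M,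
            (1/2:ℝ)^t * ((k:ℝ)^2/n + (1/2:ℝ)^(n/k)) * (((n:ℝ)*2)^k)^M :=
          Finset.sum_le_sum hterm
      _ = (∑ t ∈ Finset.Icc 1 M, (1/2:ℝ)^t) *
            (((k:ℝ)^2/n + (1/2:ℝ)^(n/k)) * (((n:ℝ)*2)^k)^M) := by
          rw [Finset.sum_mul]
          apply Finset.sum_congr rfl
          intro t _
          ring
      _ ≤ 1 * (((k:ℝ)^2/n + (1/2:ℝ)^(n/k)) * (((n:ℝ)*2)^k)^M) := by
          apply mul_le_mul_of_nonneg_right (geom_sum_Icc M) (by positivity)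
      _ = ((k:ℝ)^2/n + (1/2:ℝ)^(n/k)) * (((n:ℝ)*2)^k)^M := by ring
  -- convert to the good probability
  have hgood : probOf n M k Good =
      1 - ((Finset.univ.filter fun Φ : KFormula n M k => ¬ Good Φ).card : ℝ)
        / (Fintype.card (KFormula n M k) : ℝ) := by
    rw [probOf]
    rw [eq_sub_iff_add_eq, ← add_div, div_eq_one_iff_eq (ne_of_gt hD0)]
    have hinst : (@Finset.filter (KFormula n M k) (fun Φ => Good Φ)
        (fun a => Classical.propDecidable (Good a)) Finset.univ).card
        = (@Finset.filter (KFormula n M k) (fun Φ => Good Φ)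
        (fun a => Fintype.decidableForallFintype) Finset.univ).card := by
      congr!
    rw [hinst]
    exact_mod_cast hsplit
  rw [hgood]
  linarith

/-- **Property (2.2).** There is `k₀ > 0` such that for all `k ≥ k₀` and `m = m(n)` with
`m/n ≤ 2^k ln 2`, whp: for every set `U` of at most `n/k` variables, the number of clauses
whose variables are all contained in `U` is at most `1.1 |U| / k`. -/
theorem whp_few_clauses_inside_small_sets :
    ∃ k0 : ℕ, 0 < k0 ∧ ∀ k : ℕ, k0 ≤ k →
      ∀ m : ℕ → ℕ, (∀ n : ℕ, (m n : ℝ) / n ≤ 2 ^ k * Real.log 2) →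
        Filter.Tendsto
          (fun n : ℕ =>
            probOf n (m n) k (fun Φ =>
              ∀ U : Finset (Fin n), (U.card : ℝ) ≤ n / k →
                ((Finset.univ.filter fun i : Fin (m n) => clauseVars Φ i ⊆ U).card : ℝ)
                  ≤ 1.1 * U.card / k))
          Filter.atTop (nhds 1) := by
  refine ⟨12^11, by norm_num, ?_⟩
  intro k hk m hm
  have hk1 : 1 ≤ k := le_trans (by norm_num) hk
  have h1 : Filter.Tendsto (fun n : ℕ => ((k:ℝ)^2/n)) Filter.atTop (nhds 0) :=
    tendsto_const_div_atTop_nhds_zero_nat _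
  have h2 : Filter.Tendsto (fun n : ℕ => (1/2:ℝ)^(n/k)) Filter.atTop (nhds 0) := by
    apply Filter.Tendsto.comp
      (tendsto_pow_atTop_nhds_zero_of_lt_one (by norm_num) (by norm_num))
    apply Filter.tendsto_atTop_atTop.mpr
    intro b
    refine ⟨k*b, fun n hn => ?_⟩
    apply (Nat.le_div_iff_mul_le (by omega)).mpr
    calc b * k = k * b := Nat.mul_comm b k
      _ ≤ n := hn
  have hl : Filter.Tendsto (fun n : ℕ => 1 - ((k:ℝ)^2/n + (1/2:ℝ)^(n/k)))
      Filter.atTop (nhds 1) := by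
    have h3 := (tendsto_const_nhds (x := (1:ℝ)) (f := Filter.atTop (α := ℕ))).sub (h1.add h2)
    simpa using h3
  apply tendsto_of_tendsto_of_tendsto_of_le_of_le' hl tendsto_const_nhds
  · rw [Filter.eventually_atTop]
    refine ⟨k, fun n hn => ?_⟩
    have hn1 : 1 ≤ n := le_trans hk1 hn
    have hn0 : (0:ℝ) < n := by exact_mod_cast hn1
    have hM : (m n : ℝ) ≤ (n:ℝ) * 2^k * Real.log 2 := by
      have := hm n
      rw [div_le_iff₀ hn0] at this
      calc (m n : ℝ) ≤ 2^k * Real.log 2 * n := this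
        _ = (n:ℝ) * 2^k * Real.log 2 := by ring
    exact main_bound k n (m n) hk hn hM
  · apply Filter.Eventually.of_forall
    intro n
    rw [probOf]
    apply div_le_one_of_le₀ _ (Nat.cast_nonneg _)
    exact_mod_cast Finset.card_le_univ _
end

section
/- Let k ≥ 3 and let Φ be any k-SAT formula over V = {x_1,…,x_n} with m clauses that satisfies: for every set U ⊆ V with |U| ≤ n/k, the number of clause indices i ∈ [m] with N(Φ_i) ⊆ U is at most 1.1·|U|/k. Then for every set Z ⊆ [m] with |Z| ≤ n/k², there exists a ⌊0.9k⌋-fold matching from the clauses {Φ_i : i ∈ Z} to the variable set N(Φ_Z). -/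
open Finset
open scoped Classical

/-- The set `N(Φ_Z)` of variables occurring in the subformula with clause indices `Z`. -/
def varsOf {n m k : ℕ} (Φ : KFormula n m k) (Z : Finset (Fin m)) : Finset (Fin n) :=
  Z.biUnion (clauseVars Φ)

/-- An `l`-fold matching from the set of clauses `A` to the set of variables `B` in the
factor graph of `Φ`: a set `M` of clause–variable edges of the factor graph joining `A`
to `B` such that every clause in `A` is incident with exactly `l` edges of `M` and every
variable in `B` is incident with at most one edge of `M`. -/
def IsFoldMatching {n m k : ℕ} (Φ : KFormula n m k) (A : Finset (Fin m))
    (B : Finset (Fin n)) (l : ℕ) (M : Finset (Fin m × Fin n)) : Prop :=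
  (∀ e ∈ M, e.1 ∈ A ∧ e.2 ∈ B ∧ e.2 ∈ clauseVars Φ e.1) ∧
  (∀ i ∈ A, (M.filter fun e => e.1 = i).card = l) ∧
  (∀ x ∈ B, (M.filter fun e => e.2 = x).card ≤ 1)

/-- **Deterministic part of Lemma 2.3.** If a `k`-SAT formula `Φ` satisfies property
(2.3) (every set `U` of at most `n/k` variables fully contains at most `1.1|U|/k`
clauses), then for every `Z ⊆ [m]` with `|Z| ≤ n/k²` there is a `⌊0.9 k⌋`-fold matching
from the clauses of `Z` to `N(Φ_Z)`. -/
theorem matching_of_expansion {n m k : ℕ} (hk : 3 ≤ k) (Φ : KFormula n m k)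
    (hU : ∀ U : Finset (Fin n), (U.card : ℝ) ≤ n / k →
      ((Finset.univ.filter fun i : Fin m => clauseVars Φ i ⊆ U).card : ℝ)
        ≤ 1.1 * U.card / k) :
    ∀ Z : Finset (Fin m), (Z.card : ℝ) ≤ n / k ^ 2 →
      ∃ M : Finset (Fin m × Fin n),
        IsFoldMatching Φ Z (varsOf Φ Z) ⌊(0.9 : ℝ) * k⌋₊ M := by
  intro Z hZ
  have hk0 : (0 : ℝ) < k := by
    have : (3 : ℝ) ≤ k := by exact_mod_cast hk
    linarith
  set l : ℕ := ⌊(0.9 : ℝ) * k⌋₊ with hl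
  -- Hall's condition: every S ⊆ Z has |N(Φ_S)| ≥ l |S|
  have key : ∀ S : Finset (Fin m), S ⊆ Z → l * S.card ≤ (varsOf Φ S).card := by
    intro S hS
    have hUk : (varsOf Φ S).card ≤ k * S.card := by
      calc (varsOf Φ S).card ≤ ∑ i ∈ S, (clauseVars Φ i).card := Finset.card_biUnion_le
        _ ≤ ∑ i ∈ S, k := by
            refine Finset.sum_le_sum fun i _ => ?_
            exact (Finset.card_image_le).trans (by simp)
        _ = k * S.card := by rw [Finset.sum_const, smul_eq_mul, mul_comm]
    have hUn : ((varsOf Φ S).card : ℝ) ≤ n / k := by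
      have h1 : ((varsOf Φ S).card : ℝ) ≤ (k : ℝ) * S.card := by exact_mod_cast hUk
      have h2 : (S.card : ℝ) ≤ n / k ^ 2 :=
        le_trans (by exact_mod_cast Finset.card_le_card hS) hZ
      have h3 : (k : ℝ) * S.card ≤ (k : ℝ) * (n / k ^ 2) :=
        mul_le_mul_of_nonneg_left h2 (le_of_lt hk0)
      have h4 : (k : ℝ) * (n / k ^ 2) = n / k := by
        field_simp
      linarith
    have hfil := hU _ hUn
    have hSsub : S ⊆ Finset.univ.filter fun i : Fin m => clauseVars Φ i ⊆ varsOf Φ S := by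
      intro i hi
      refine Finset.mem_filter.mpr ⟨Finset.mem_univ _, fun x hx => ?_⟩
      exact Finset.mem_biUnion.mpr ⟨i, hi, hx⟩
    have hSle : (S.card : ℝ) ≤ 1.1 * (varsOf Φ S).card / k := by
      refine le_trans ?_ hfil
      exact_mod_cast Finset.card_le_card hSsub
    have hkS : (S.card : ℝ) * k ≤ 1.1 * (varsOf Φ S).card := (le_div_iff₀ hk0).mp hSle
    have hlk : (l : ℝ) ≤ 0.9 * k := Nat.floor_le (by positivity)
    have hfin : ((l * S.card : ℕ) : ℝ) ≤ ((varsOf Φ S).card : ℝ) := by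
      push_cast
      nlinarith [Nat.cast_nonneg (α := ℝ) S.card, Nat.cast_nonneg (α := ℝ) (varsOf Φ S).card]
    exact_mod_cast hfin
  -- blow-up index type: l copies of each clause in Z
  let ι := {p : Fin m × Fin l // p.1 ∈ Z}
  have hall : ∀ s : Finset ι, s.card ≤ (s.biUnion fun p => clauseVars Φ p.val.1).card := by
    intro s
    set S : Finset (Fin m) := s.image (fun p : ι => p.val.1) with hSdef
    have hSZ : S ⊆ Z := by
      intro i hi
      rw [hSdef, Finset.mem_image] at hi
      obtain ⟨p, _, rfl⟩ := hi
      exact p.property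
    have hsS : s.card ≤ S.card * l := by
      have : s.card ≤ (S ×ˢ (Finset.univ : Finset (Fin l))).card := by
        refine Finset.card_le_card_of_injOn (fun p => p.val) ?_ ?_
        · intro p hp
          refine Finset.mem_product.mpr ⟨?_, Finset.mem_univ _⟩
          exact Finset.mem_image.mpr ⟨p, hp, rfl⟩
        · intro p _ q _ h
          exact Subtype.ext h
      simpa [Finset.card_product] using this
    have hbi : (s.biUnion fun p => clauseVars Φ p.val.1) = varsOf Φ S := by
      ext x
      simp only [varsOf, Finset.mem_biUnion, hSdef, Finset.mem_image]
      constructor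
      · rintro ⟨p, hp, hx⟩
        exact ⟨p.val.1, ⟨p, hp, rfl⟩, hx⟩
      · rintro ⟨i, ⟨p, hp, rfl⟩, hx⟩
        exact ⟨p, hp, hx⟩
    calc s.card ≤ S.card * l := hsS
      _ = l * S.card := mul_comm _ _
      _ ≤ (varsOf Φ S).card := key S hSZ
      _ = (s.biUnion fun p => clauseVars Φ p.val.1).card := by rw [hbi]
  obtain ⟨f, hfinj, hf⟩ :=
    (Finset.all_card_le_biUnion_card_iff_exists_injective
      (fun p : ι => clauseVars Φ p.val.1)).mp hall
  -- the matching
  refine ⟨Finset.univ.image (fun p : ι => (p.val.1, f p)), ?_, ?_, ?_⟩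
  · rintro e he
    rw [Finset.mem_image] at he
    obtain ⟨p, _, rfl⟩ := he
    exact ⟨p.property, Finset.mem_biUnion.mpr ⟨p.val.1, p.property, hf p⟩, hf p⟩
  · intro i hi
    have hginj : Function.Injective (fun p : ι => (p.val.1, f p)) := by
      intro p q h
      exact hfinj (congrArg Prod.snd h)
    have hfilt :
        ((Finset.univ.image (fun p : ι => (p.val.1, f p))).filter fun e => e.1 = i)
          = (Finset.univ.filter fun p : ι => p.val.1 = i).image
              (fun p : ι => (p.val.1, f p)) := by
      ext e
      simp only [Finset.mem_filter, Finset.mem_image, Finset.mem_univ, true_and]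
      constructor
      · rintro ⟨⟨p, rfl⟩, hpi⟩
        exact ⟨p, hpi, rfl⟩
      · rintro ⟨p, hpi, rfl⟩
        exact ⟨⟨p, rfl⟩, hpi⟩
    rw [hfilt, Finset.card_image_of_injective _ hginj]
    -- count the copies of clause i
    refine (Finset.card_bij (t := (Finset.univ : Finset (Fin l)))
      (fun p _ => p.val.2) ?_ ?_ ?_).trans (Finset.card_fin l)
    · intro p _
      exact Finset.mem_univ _
    · intro p hp q hq h
      rw [Finset.mem_filter] at hp hq
      exact Subtype.ext (Prod.ext (hp.2.trans hq.2.symm) h)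
    · intro j _
      exact ⟨⟨(i, j), hi⟩, Finset.mem_filter.mpr ⟨Finset.mem_univ _, rfl⟩, rfl⟩
  · intro x _
    refine Finset.card_le_one.mpr ?_
    intro a ha b hb
    rw [Finset.mem_filter, Finset.mem_image] at ha hb
    obtain ⟨⟨p, _, rfl⟩, hpx⟩ := ha
    obtain ⟨⟨q, _, rfl⟩, hqx⟩ := hb
    have : f p = f q := by
      simpa using hpx.trans hqx.symm
    rw [hfinj this]
end

section
/- There exists a constant k_0 > 0 such that for all integers k ≥ k_0 and all reals ε > 0 and λ with 4 < λ ≤ k satisfying ε ≤ k^{-3} and ε^λ ≤ (1/e)·(2e)^{-4k}, and for all sequences m = m(n) with m/n ≤ 2^k·ln 2, the random formula Φ = Φ_k(n,m) has the following property with high probability: for every set Z ⊆ [m] with |Z| ≤ εn and every sequence i_1,…,i_l of pairwise distinct indices in [m]∖Z such that |N(Φ_{i_s}) ∩ N(Φ_{Z ∪ {i_j : 1 ≤ j < s}})| ≥ λ for all 1 ≤ s ≤ l, one has l ≤ εn. -/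
open Finset
open scoped Classical

set_option maxHeartbeats 1000000

def CoreP (n M k : ℕ) (ε lam : ℝ) (Φ : KFormula n M k) : Prop :=
  ∀ Z : Finset (Fin M), (Z.card : ℝ) ≤ ε * n →
    ∀ (l : ℕ) (i : Fin l → Fin M),
      Function.Injective i →
      (∀ s, i s ∉ Z) →
      (∀ s : Fin l,
        lam ≤ ((clauseVars Φ (i s) ∩
          varsOf Φ (Z ∪ (Finset.univ.filter fun j : Fin l => j < s).image i)).card : ℝ)) →
      (l : ℝ) ≤ ε * n

lemma aux_ratio_le_exp (y : ℕ) (hy : 1 ≤ y) :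
    (((y : ℝ) + 1) / y) ^ y ≤ Real.exp 1 := by
  have hy0 : (0:ℝ) < y := by exact_mod_cast hy
  have h1 : ((y:ℝ)+1)/y = 1 + 1/y := by field_simp
  have h2 : (1:ℝ) + 1/y ≤ Real.exp (1/y) := by
    have := Real.add_one_le_exp (1/(y:ℝ)); linarith
  calc (((y:ℝ)+1)/y)^y ≤ (Real.exp (1/(y:ℝ)))^y := by
        rw [h1]; exact pow_le_pow_left₀ (by positivity) h2 y
    _ = Real.exp 1 := by
        rw [← Real.exp_nat_mul]
        congr 1
        field_simp

lemma aux_pow_self_le (x : ℕ) :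
    (x:ℝ)^x ≤ Real.exp 1 ^ x * (Nat.factorial x : ℝ) := by
  induction x with
  | zero => simp
  | succ n ih =>
    rcases Nat.eq_zero_or_pos n with h0 | hpos
    · subst h0
      have : (1:ℝ) ≤ Real.exp 1 := by
        have := Real.add_one_le_exp (1:ℝ); linarith
      simpa [Nat.factorial] using this
    · have hn0 : (0:ℝ) < n := by exact_mod_cast hpos
      have h1 : ((n:ℝ)+1)^(n+1) = ((n:ℝ)+1) * (((n:ℝ)+1)/n)^n * (n:ℝ)^n := by
        rw [div_pow, pow_succ]
        field_simp
      have h2 : (((n:ℝ)+1)/n)^n ≤ Real.exp 1 := aux_ratio_le_exp n hpos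
      have h3 : ((n:ℝ)+1) * (((n:ℝ)+1)/n)^n * (n:ℝ)^n
          ≤ ((n:ℝ)+1) * Real.exp 1 * (Real.exp 1 ^ n * (Nat.factorial n : ℝ)) := by
        have hp1 : (0:ℝ) ≤ ((n:ℝ)+1) := by positivity
        have hp2 : (0:ℝ) ≤ (((n:ℝ)+1)/n)^n := by positivity
        have hp3 : (0:ℝ) ≤ (n:ℝ)^n := by positivity
        calc ((n:ℝ)+1) * (((n:ℝ)+1)/n)^n * (n:ℝ)^n
            ≤ ((n:ℝ)+1) * Real.exp 1 * (n:ℝ)^n := by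
              apply mul_le_mul_of_nonneg_right _ hp3
              exact mul_le_mul_of_nonneg_left h2 hp1
          _ ≤ ((n:ℝ)+1) * Real.exp 1 * (Real.exp 1 ^ n * (Nat.factorial n : ℝ)) := by
              apply mul_le_mul_of_nonneg_left ih
              positivity
      have hfac : (Nat.factorial (n+1) : ℝ) = ((n:ℝ)+1) * (Nat.factorial n : ℝ) := by
        push_cast [Nat.factorial_succ]; ring
      have : ((n:ℝ)+1)^(n+1) ≤ ((n:ℝ)+1) * Real.exp 1 * (Real.exp 1 ^ n * (Nat.factorial n : ℝ)) := by
        rw [h1]; exact h3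
      calc ((n+1:ℕ):ℝ)^(n+1) = ((n:ℝ)+1)^(n+1) := by push_cast; ring_nf
        _ ≤ ((n:ℝ)+1) * Real.exp 1 * (Real.exp 1 ^ n * (Nat.factorial n : ℝ)) := this
        _ = Real.exp 1 ^ (n+1) * (Nat.factorial (n+1) : ℝ) := by
            rw [hfac, pow_succ]; ring

lemma aux_choose_base (M x : ℕ) (hx : 1 ≤ x) (hxM : x ≤ M) :
    (M.choose x : ℝ) ≤ (Real.exp 1 * M / x) ^ x := by
  have hx0 : (0:ℝ) < x := by exact_mod_cast hx
  have hM0 : (0:ℝ) < M := by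
    have : (0:ℕ) < M := lt_of_lt_of_le hx hxM
    exact_mod_cast this
  have h1 : (M.choose x : ℝ) ≤ (M:ℝ)^x / (Nat.factorial x : ℝ) := by
    exact_mod_cast Nat.choose_le_pow_div x M
  have h2 : (M:ℝ)^x / (Nat.factorial x : ℝ) ≤ (Real.exp 1 * M / x) ^ x := by
    rw [div_pow, mul_pow]
    rw [div_le_div_iff₀ (by positivity) (by positivity)]
    calc (M:ℝ)^x * (x:ℝ)^x ≤ (M:ℝ)^x * (Real.exp 1 ^ x * (Nat.factorial x : ℝ)) := by
          apply mul_le_mul_of_nonneg_left (aux_pow_self_le x) (by positivity)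
      _ = Real.exp 1 ^ x * (M:ℝ)^x * (Nat.factorial x : ℝ) := by ring
  exact h1.trans h2

lemma aux_choose_step (M y : ℕ) (hy : 1 ≤ y) (hyM : y + 1 ≤ M) :
    (Real.exp 1 * M / y) ^ y ≤ (Real.exp 1 * M / ((y+1 : ℕ) : ℝ)) ^ (y+1) := by
  have hcast : ((y+1 : ℕ) : ℝ) = (y:ℝ) + 1 := by push_cast; ring
  rw [hcast]
  have hy0 : (0:ℝ) < y := by exact_mod_cast hy
  have hM0 : (0:ℝ) < M := by
    have : (0:ℕ) < M := lt_of_lt_of_le (Nat.le_add_left 1 y) hyM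
    exact_mod_cast this
  have hyMr : (y:ℝ) + 1 ≤ M := by exact_mod_cast hyM
  have key : (Real.exp 1 * M / y) ^ y
      = (((y:ℝ)+1)/y)^y * (Real.exp 1 * M / ((y:ℝ)+1)) ^ y := by
    rw [← mul_pow]
    congr 1
    field_simp
  have h2 : (((y:ℝ)+1)/y)^y * (Real.exp 1 * M / ((y:ℝ)+1)) ^ y
      ≤ Real.exp 1 * (Real.exp 1 * M / ((y:ℝ)+1)) ^ y := by
    apply mul_le_mul_of_nonneg_right (aux_ratio_le_exp y hy) (by positivity)
  have h3 : Real.exp 1 ≤ Real.exp 1 * M / ((y:ℝ)+1) := by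
    rw [le_div_iff₀ (by positivity)]
    have h4 : Real.exp 1 * ((y:ℝ)+1) ≤ Real.exp 1 * M :=
      mul_le_mul_of_nonneg_left hyMr (le_of_lt (Real.exp_pos 1))
    linarith
  calc (Real.exp 1 * M / y) ^ y
      ≤ Real.exp 1 * (Real.exp 1 * M / ((y:ℝ)+1)) ^ y := by rw [key]; exact h2
    _ ≤ (Real.exp 1 * M / ((y:ℝ)+1)) * (Real.exp 1 * M / ((y:ℝ)+1)) ^ y := by
        apply mul_le_mul_of_nonneg_right h3 (by positivity)
    _ = (Real.exp 1 * M / ((y:ℝ)+1)) ^ (y+1) := by rw [pow_succ]; ring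

lemma aux_choose_le (M x y : ℕ) (hxy : x ≤ y) (hyM : y ≤ M) (hy : 1 ≤ y) :
    (M.choose x : ℝ) ≤ (Real.exp 1 * M / y) ^ y := by
  rcases Nat.eq_zero_or_pos x with hx0 | hx1
  · subst hx0
    have hM0 : (0:ℝ) < M := by
      have : (0:ℕ) < M := lt_of_lt_of_le hy hyM
      exact_mod_cast this
    have h1 : (1:ℝ) ≤ Real.exp 1 * M / y := by
      rw [le_div_iff₀ (by exact_mod_cast hy : (0:ℝ) < (y:ℝ))]
      have he : (1:ℝ) ≤ Real.exp 1 := by have := Real.add_one_le_exp (1:ℝ); linarith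
      have hyMr : (y:ℝ) ≤ M := by exact_mod_cast hyM
      nlinarith [Real.exp_pos 1]
    simpa using one_le_pow₀ h1
  · -- x ≥ 1 : induct from y = x upward
    clear hy
    induction y with
    | zero => omega
    | succ y ih =>
      rcases Nat.lt_or_ge y x with h | h
      · -- x = y + 1
        have hxe : x = y + 1 := by omega
        subst hxe
        exact aux_choose_base M (y+1) hx1 hyM
      · rcases Nat.eq_zero_or_pos y with hy0 | hy1
        · omega
        · have := ih h (by omega)
          exact this.trans (aux_choose_step M y hy1 hyM)

lemma aux_log_le_sqrt {x : ℝ} (hx : 1 ≤ x) : Real.log x ≤ 2 * Real.sqrt x := by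
  have h0 : (0:ℝ) ≤ x := by linarith
  have h1 : Real.log (Real.sqrt x) = Real.log x / 2 := Real.log_sqrt h0
  have h2 : Real.log (Real.sqrt x) ≤ Real.sqrt x - 1 :=
    Real.log_le_sub_one_of_pos (Real.sqrt_pos.2 (by linarith))
  have h3 : (0:ℝ) ≤ Real.sqrt x := Real.sqrt_nonneg x
  linarith [h1 ▸ h2]

lemma aux_logk_le (k : ℕ) (hk : 4096 ≤ k) : Real.log k ≤ (k:ℝ)/32 := by
  have hk1 : (4096:ℝ) ≤ k := by exact_mod_cast hk
  have h1 : Real.log k ≤ 2 * Real.sqrt k := aux_log_le_sqrt (by linarith)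
  have h2 : (64:ℝ) ≤ Real.sqrt k := by
    have : Real.sqrt 4096 ≤ Real.sqrt k := Real.sqrt_le_sqrt hk1
    have h4096 : Real.sqrt (4096:ℝ) = 64 := by
      rw [show (4096:ℝ) = 64^2 by norm_num, Real.sqrt_sq (by norm_num : (0:ℝ) ≤ 64)]
    linarith [h4096 ▸ this]
  have h3 : Real.sqrt k * 64 ≤ Real.sqrt k * Real.sqrt k :=
    mul_le_mul_of_nonneg_left h2 (Real.sqrt_nonneg _)
  have h4 : Real.sqrt k * Real.sqrt k = (k:ℝ) := Real.mul_self_sqrt (by linarith)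
  nlinarith

lemma aux_num (k L : ℕ) (lam ε : ℝ) (hk : 4096 ≤ k) (h4 : 4 < lam) (hlk : lam ≤ k)
    (hL : L = ⌈lam⌉₊) (hε0 : 0 < ε) (hε1 : ε ≤ ((k:ℝ)^3)⁻¹)
    (hεl : ε ^ lam ≤ (Real.exp 1)⁻¹ * ((2*Real.exp 1)^(4*k))⁻¹) :
    (Real.exp 1 * 2^k * Real.log 2 / ε)^2 * Real.exp 1 ^ (2*k - L) * (3*k*ε)^L ≤ 1/2 := by
  have hk1 : (4096:ℝ) ≤ k := by exact_mod_cast hk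
  have hk0 : (0:ℝ) < k := by linarith
  have hlg0 : 0 < Real.log 2 := Real.log_pos (by norm_num)
  have hlg_lo : 0.6931 ≤ Real.log 2 := by linarith [Real.log_two_gt_d9]
  have hlg_hi : Real.log 2 ≤ 0.6932 := by linarith [Real.log_two_lt_d9]
  have hL5 : 5 ≤ L := by
    have : (4:ℕ) < ⌈lam⌉₊ := by
      rw [Nat.lt_ceil]; exact_mod_cast h4
    omega
  have hLk : L ≤ k := by
    rw [hL, Nat.ceil_le]; exact_mod_cast hlk
  have hlamL : lam ≤ (L:ℝ) := hL ▸ Nat.le_ceil lam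
  have hlam0 : (0:ℝ) < lam := by linarith
  have hLr : (5:ℝ) ≤ L := by exact_mod_cast hL5
  have hLkr : (L:ℝ) ≤ k := by exact_mod_cast hLk
  -- positivity of pieces
  have hA0 : 0 < (Real.exp 1 * 2^k * Real.log 2 / ε)^2 * Real.exp 1 ^ (2*k - L) * (3*k*ε)^L := by
    have h1 : 0 < Real.exp 1 * 2^k * Real.log 2 / ε := by positivity
    have h2 : 0 < (3:ℝ)*k*ε := by positivity
    positivity
  rw [← Real.exp_log hA0, show (1/2 : ℝ) = Real.exp (Real.log (1/2)) by
      rw [Real.exp_log]; norm_num]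
  apply Real.exp_le_exp.2
  have hlhalf : Real.log (1/2 : ℝ) = - Real.log 2 := by
    rw [one_div, Real.log_inv]
  rw [hlhalf]
  -- expand the logarithm
  have hB0 : Real.exp 1 * 2^k * Real.log 2 / ε ≠ 0 := by positivity
  have h3k0 : (3:ℝ)*k ≠ 0 := by positivity
  have hlogA : Real.log ((Real.exp 1 * 2^k * Real.log 2 / ε)^2 * Real.exp 1 ^ (2*k - L) * (3*k*ε)^L)
      = 2*(1 + k*Real.log 2 + Real.log (Real.log 2) - Real.log ε)
        + ((2*k - L : ℕ) : ℝ) + L * (Real.log (3*k) + Real.log ε) := by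
    rw [Real.log_mul (by positivity) (by positivity), Real.log_mul (by positivity) (by positivity)]
    rw [Real.log_pow, Real.log_pow, Real.log_pow]
    rw [Real.log_div (by positivity) (ne_of_gt hε0)]
    rw [Real.log_mul (by positivity) (ne_of_gt hlg0), Real.log_mul (Real.exp_ne_zero 1) (by positivity)]
    rw [Real.log_mul h3k0 (ne_of_gt hε0), Real.log_pow, Real.log_exp]
    push_cast
    ring
  rw [hlogA]
  -- key facts about log ε
  have hlogk_pos : 0 < Real.log k := Real.log_pos (by linarith)
  have hlogε3 : Real.log ε ≤ -(3 * Real.log k) := by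
    have h1 : Real.log ε ≤ Real.log (((k:ℝ)^3)⁻¹) :=
      Real.log_le_log hε0 hε1
    rw [Real.log_inv, Real.log_pow] at h1
    push_cast at h1
    linarith
  have hlogε_neg : Real.log ε < 0 := lt_of_le_of_lt hlogε3 (by linarith)
  have hlamlogε : lam * Real.log ε ≤ -(1 + 4*k*(Real.log 2 + 1)) := by
    have h1 : Real.log (ε ^ lam) ≤ Real.log ((Real.exp 1)⁻¹ * ((2*Real.exp 1)^(4*k))⁻¹) :=
      Real.log_le_log (Real.rpow_pos_of_pos hε0 lam) hεl
    rw [Real.log_rpow hε0] at h1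
    rw [Real.log_mul (by positivity) (by positivity), Real.log_inv, Real.log_inv,
      Real.log_exp, Real.log_pow, Real.log_mul (by norm_num) (Real.exp_ne_zero 1),
      Real.log_exp] at h1
    push_cast at h1
    linarith
  have hlamlogε_neg : lam * Real.log ε ≤ 0 := by nlinarith
  have hcast2kL : ((2*k - L : ℕ) : ℝ) = 2*(k:ℝ) - L := by
    have : L ≤ 2*k := by omega
    push_cast [Nat.cast_sub this]
    ring
  have hlog3k : Real.log (3*(k:ℝ)) = Real.log 3 + Real.log k :=
    Real.log_mul (by norm_num) (ne_of_gt hk0)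
  have hlog3 : Real.log 3 ≤ 2 * Real.log 2 := by
    have h1 : Real.log 3 ≤ Real.log 4 := Real.log_le_log (by norm_num) (by norm_num)
    have h2 : Real.log 4 = 2 * Real.log 2 := by
      rw [show (4:ℝ) = 2^2 by norm_num, Real.log_pow]; push_cast; ring
    linarith
  have hlog3_ge1 : 1 ≤ Real.log 3 := by
    have h1 : Real.log (Real.exp 1) ≤ Real.log 3 := by
      apply Real.log_le_log (Real.exp_pos 1)
      linarith [Real.exp_one_lt_d9]
    rwa [Real.log_exp] at h1
  have hloglg : Real.log (Real.log 2) ≤ 0 := Real.log_nonpos (by linarith) (by linarith)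
  have hlogk32 : Real.log k ≤ (k:ℝ)/32 := aux_logk_le k hk
  have hklg : 0.6931 * (k:ℝ) ≤ (k:ℝ) * Real.log 2 := by
    have := mul_le_mul_of_nonneg_left hlg_lo (le_of_lt hk0)
    linarith
  have hklg_hi : (k:ℝ) * Real.log 2 ≤ 0.6932 * (k:ℝ) := by
    have := mul_le_mul_of_nonneg_left hlg_hi (le_of_lt hk0)
    linarith
  have hLP : (L:ℝ) * Real.log (3*(k:ℝ)) = (L:ℝ) * Real.log 3 + (L:ℝ) * Real.log k := by
    rw [hlog3k]; ring
  rcases le_or_gt L 6 with hL6 | hL7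
  · -- Case I : L ≤ 6
    have hL6r : (L:ℝ) ≤ 6 := by exact_mod_cast hL6
    have hlam_le : lam ≤ (L:ℝ) := hlamL
    -- (L-2) * log ε ≤ (3/5) * (lam * log ε)
    have hcoef : (3/5 : ℝ) ≤ ((L:ℝ) - 2) / lam := by
      rw [le_div_iff₀ hlam0]
      linarith
    have hstep : ((L:ℝ) - 2) * Real.log ε ≤ (3/5) * (lam * Real.log ε) := by
      have h1 : ((L:ℝ) - 2) * Real.log ε = (((L:ℝ)-2)/lam) * (lam * Real.log ε) := by
        field_simp
      rw [h1]
      exact mul_le_mul_of_nonpos_right hcoef hlamlogε_neg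
    have hlog3k_nonneg : 0 ≤ Real.log (3*(k:ℝ)) := Real.log_nonneg (by linarith)
    have hlog3k_le : Real.log (3*(k:ℝ)) ≤ 2*Real.log 2 + (k:ℝ)/32 := by
      rw [hlog3k]; linarith
    have hprod : (L:ℝ) * Real.log (3*(k:ℝ)) ≤ 6 * (2*Real.log 2 + (k:ℝ)/32) := by
      apply mul_le_mul hL6r hlog3k_le hlog3k_nonneg (by norm_num)
    rw [hcast2kL]
    linarith [hstep, hlamlogε, hprod, hklg, hk1, hLr, hlg_lo, hlg_hi, hloglg]
  · -- Case II : 7 ≤ L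
    have hL7r : (7:ℝ) ≤ L := by exact_mod_cast hL7
    have hsplit1 : ((L:ℝ)/3 - 2) * Real.log ε ≤ ((L:ℝ)/3 - 2) * (-(3*Real.log k)) := by
      apply mul_le_mul_of_nonneg_left hlogε3
      linarith
    have hcoef2 : (2/3 : ℝ) ≤ (2*(L:ℝ)) / (3*lam) := by
      rw [le_div_iff₀ (by positivity)]
      linarith
    have hsplit2 : (2*(L:ℝ)/3) * Real.log ε ≤ (2/3) * (lam * Real.log ε) := by
      have h1 : (2*(L:ℝ)/3) * Real.log ε = ((2*(L:ℝ))/(3*lam)) * (lam * Real.log ε) := by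
        field_simp
      rw [h1]
      exact mul_le_mul_of_nonpos_right hcoef2 hlamlogε_neg
    have hprod2 : (L:ℝ) * Real.log 3 - (L:ℝ) ≤ (k:ℝ) * (2*Real.log 2) - (k:ℝ) := by
      have h1 : (L:ℝ) * (Real.log 3 - 1) ≤ (k:ℝ) * (2*Real.log 2 - 1) := by
        apply mul_le_mul hLkr (by linarith) (by linarith) (by linarith)
      linarith [h1]
    rw [hcast2kL]
    linarith [hsplit1, hsplit2, hlamlogε, hprod2, hklg_hi, hk1, hLr, hlg_lo, hlg_hi, hloglg,
      hlogk32, hlogk_pos, hLP, hLkr]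



lemma aux_count (n M k : ℕ) (S : Finset (Fin M)) (W : Finset (Fin n)) :
    (Finset.univ.filter fun Φ : KFormula n M k => ∀ i ∈ S, ∀ j, (Φ i j).1 ∈ W).card
      = ((W.card * 2)^k)^S.card * ((n*2)^k)^(M - S.card) := by
  classical
  have h1 : (Finset.univ.filter fun Φ : KFormula n M k => ∀ i ∈ S, ∀ j, (Φ i j).1 ∈ W)
      = Fintype.piFinset (fun i => if i ∈ S then
          Fintype.piFinset (fun _ : Fin k => W ×ˢ (Finset.univ : Finset Bool))
          else Finset.univ) := by
    ext Φ
    simp only [mem_filter, mem_univ, true_and, Fintype.mem_piFinset]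
    constructor
    · intro h i
      by_cases hi : i ∈ S
      · rw [if_pos hi, Fintype.mem_piFinset]
        intro j
        rw [Finset.mem_product]
        exact ⟨h i hi j, mem_univ _⟩
      · rw [if_neg hi]; exact mem_univ _
    · intro h i hi j
      have h2 := h i
      rw [if_pos hi, Fintype.mem_piFinset] at h2
      have h3 := h2 j
      rw [Finset.mem_product] at h3
      exact h3.1
  rw [h1, Fintype.card_piFinset]
  have hinner : (Fintype.piFinset (fun _ : Fin k => W ×ˢ (Finset.univ : Finset Bool))).card
      = (W.card * 2)^k := by
    rw [Fintype.card_piFinset]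
    simp [Finset.card_product]
  have huniv : (Finset.univ : Finset (Fin k → Fin n × Bool)).card = (n*2)^k := by
    rw [Finset.card_univ]
    rw [Fintype.card_fun]
    simp
  have h2 : ∀ i : Fin M,
      ((if i ∈ S then Fintype.piFinset (fun _ : Fin k => W ×ˢ (Finset.univ : Finset Bool))
        else Finset.univ)).card = if i ∈ S then (W.card * 2)^k else (n*2)^k := by
    intro i
    by_cases hi : i ∈ S <;> simp [hi, hinner, huniv]
  rw [Finset.prod_congr rfl (fun i _ => h2 i)]
  rw [Finset.prod_ite]
  rw [Finset.prod_const, Finset.prod_const]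
  have h3 : Finset.univ.filter (fun i : Fin M => i ∈ S) = S := by
    ext i; simp
  have h4 : (Finset.univ.filter (fun i : Fin M => ¬ i ∈ S)).card = M - S.card := by
    have : Finset.univ.filter (fun i : Fin M => ¬ i ∈ S) = Finset.univ \ S := by
      ext i; simp
    rw [this, Finset.card_sdiff_of_subset (Finset.subset_univ S)]
    simp
  rw [h3, h4]

lemma aux_card_univ (n M k : ℕ) :
    Fintype.card (KFormula n M k) = ((n*2)^k)^M := by
  rw [Fintype.card_fun, Fintype.card_fun]
  simp

lemma aux_clauseVars_card_le {n M k : ℕ} (Φ : KFormula n M k) (i : Fin M) :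
    (clauseVars Φ i).card ≤ k := by
  calc (clauseVars Φ i).card ≤ (Finset.univ : Finset (Fin k)).card := Finset.card_image_le
    _ = k := by simp

lemma aux_varsOf_card_le {n M k : ℕ} (Φ : KFormula n M k) (S : Finset (Fin M)) :
    (varsOf Φ S).card ≤ k * S.card := by
  calc (varsOf Φ S).card ≤ ∑ i ∈ S, (clauseVars Φ i).card := Finset.card_biUnion_le
    _ ≤ S.card • k := Finset.sum_le_card_nsmul S _ k (fun i _ => aux_clauseVars_card_le Φ i)
    _ = k * S.card := by rw [smul_eq_mul, mul_comm]

lemma aux_varsOf_union {n M k : ℕ} (Φ : KFormula n M k) (A B : Finset (Fin M)) :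
    varsOf Φ (A ∪ B) = varsOf Φ A ∪ varsOf Φ B := by
  ext x
  simp only [varsOf, Finset.mem_biUnion, Finset.mem_union]
  constructor
  · rintro ⟨i, (h | h), hx⟩
    · exact Or.inl ⟨i, h, hx⟩
    · exact Or.inr ⟨i, h, hx⟩
  · rintro (⟨i, h, hx⟩ | ⟨i, h, hx⟩)
    · exact ⟨i, Or.inl h, hx⟩
    · exact ⟨i, Or.inr h, hx⟩

lemma aux_varsOf_mono {n M k : ℕ} (Φ : KFormula n M k) {A B : Finset (Fin M)} (h : A ⊆ B) :
    varsOf Φ A ⊆ varsOf Φ B :=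
  Finset.biUnion_subset_biUnion_of_subset_left _ h

lemma aux_stepA {n M k : ℕ} (Φ : KFormula n M k) (L : ℕ) (lam ε : ℝ)
    (hεn : 0 ≤ ε * (n:ℝ)) (hL : L = ⌈lam⌉₊)
    (hbad : ¬ CoreP n M k ε lam Φ) :
    ∃ Z T : Finset (Fin M), Z.card ≤ ⌊ε*(n:ℝ)⌋₊ ∧ T.card = ⌊ε*(n:ℝ)⌋₊ + 1 ∧
      Disjoint Z T ∧
      (varsOf Φ (Z ∪ T)).card ≤ k * Z.card + (k - L) * (⌊ε*(n:ℝ)⌋₊ + 1) := by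
  unfold CoreP at hbad
  push_neg at hbad
  obtain ⟨Z, hZ, l, i, hinj, hout, hcond, hl⟩ := hbad
  set z0 := ⌊ε*(n:ℝ)⌋₊ with hz0
  set t := z0 + 1 with ht
  have hz0l : z0 < l := by
    have h1 : (z0:ℝ) ≤ ε * n := Nat.floor_le hεn
    have h2 : (z0:ℝ) < l := lt_of_le_of_lt h1 hl
    exact_mod_cast h2
  have htl : t ≤ l := hz0l
  set i' : Fin t → Fin M := fun s => i (Fin.castLE htl s) with hi'
  have hinj' : Function.Injective i' := by
    intro a b hab
    exact Fin.castLE_injective htl (hinj hab)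
  -- the key induction
  have claim : ∀ s : ℕ, s ≤ t →
      (varsOf Φ (Z ∪ (Finset.univ.filter fun j : Fin t => (j:ℕ) < s).image i')).card
        ≤ k * Z.card + (k - L) * s := by
    intro s
    induction s with
    | zero =>
      intro _
      have hfe : (Finset.univ.filter fun j : Fin t => (j:ℕ) < 0) = ∅ := by
        ext j; simp
      rw [hfe]
      simp only [Finset.image_empty, Finset.union_empty, Nat.mul_zero, Nat.add_zero]
      exact aux_varsOf_card_le Φ Z
    | succ s ih =>
      intro hs1
      have hst : s < t := hs1
      set σ : Fin t := ⟨s, hst⟩ with hσ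
      have hfilt : (Finset.univ.filter fun j : Fin t => (j:ℕ) < s+1)
          = insert σ (Finset.univ.filter fun j : Fin t => (j:ℕ) < s) := by
        ext j
        simp only [Finset.mem_filter, Finset.mem_univ, true_and, Finset.mem_insert]
        constructor
        · intro h
          rcases Nat.lt_succ_iff_lt_or_eq.1 h with h | h
          · exact Or.inr h
          · exact Or.inl (Fin.ext h)
        · rintro (rfl | h)
          · exact Nat.lt_succ_self s
          · exact Nat.lt_succ_of_lt h
      rw [hfilt, Finset.image_insert, Finset.union_insert]
      set B := varsOf Φ (Z ∪ (Finset.univ.filter fun j : Fin t => (j:ℕ) < s).image i') with hB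
      set A := clauseVars Φ (i' σ) with hA
      have hvins : varsOf Φ
          (insert (i' σ) (Z ∪ (Finset.univ.filter fun j : Fin t => (j:ℕ) < s).image i'))
          = A ∪ B := by
        rw [varsOf, Finset.biUnion_insert]
        rfl
      -- the intersection hypothesis
      have himg : (Finset.univ.filter fun j : Fin l => j < Fin.castLE htl σ).image i
          = (Finset.univ.filter fun j : Fin t => (j:ℕ) < s).image i' := by
        ext x
        simp only [Finset.mem_image, Finset.mem_filter, Finset.mem_univ, true_and]
        constructor
        · rintro ⟨j, hj, rfl⟩
          have hjs : (j:ℕ) < s := hj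
          refine ⟨⟨(j:ℕ), lt_trans hjs hst⟩, hjs, ?_⟩
          have hcst : Fin.castLE htl ⟨(j:ℕ), lt_trans hjs hst⟩ = j := Fin.ext rfl
          simp only [hi', hcst]
        · rintro ⟨j', hj', rfl⟩
          refine ⟨Fin.castLE htl j', ?_, rfl⟩
          exact hj'
      have hinter : L ≤ (A ∩ B).card := by
        have h1 := hcond (Fin.castLE htl σ)
        rw [himg] at h1
        have h2 : lam ≤ ((A ∩ B).card : ℝ) := h1
        rw [hL]
        exact Nat.ceil_le.2 h2
      have hAcard : A.card ≤ k := aux_clauseVars_card_le Φ (i' σ)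
      have hsdiff : (A \ B).card ≤ k - L := by
        have h1 := Finset.card_inter_add_card_sdiff A B
        omega
      have hABcard : (A ∪ B).card ≤ (k - L) + B.card := by
        calc (A ∪ B).card = ((A \ B) ∪ B).card := by rw [Finset.sdiff_union_self_eq_union]
          _ ≤ (A \ B).card + B.card := Finset.card_union_le _ _
          _ ≤ (k - L) + B.card := by omega
      have ihv := ih (le_of_lt hst)
      rw [hvins]
      have hfin : (k - L) + (k * Z.card + (k - L) * s) = k * Z.card + (k - L) * (s+1) := by
        rw [Nat.mul_succ]
        omega
      calc (A ∪ B).card ≤ (k - L) + B.card := hABcard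
        _ ≤ (k - L) + (k * Z.card + (k - L) * s) := by omega
        _ = k * Z.card + (k - L) * (s+1) := hfin
  -- apply at s = t
  have hfu : (Finset.univ.filter fun j : Fin t => (j:ℕ) < t) = Finset.univ := by
    ext j; simp [j.isLt]
  have hfinal := claim t le_rfl
  rw [hfu] at hfinal
  refine ⟨Z, Finset.univ.image i', Nat.le_floor hZ, ?_, ?_, hfinal⟩
  · rw [Finset.card_image_of_injective _ hinj', Finset.card_univ, Fintype.card_fin]
  · rw [Finset.disjoint_right]
    intro x hx
    rw [Finset.mem_image] at hx
    obtain ⟨j, _, rfl⟩ := hx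
    exact hout _

lemma aux_probOf_le_one (n M k : ℕ) (P : KFormula n M k → Prop) : probOf n M k P ≤ 1 := by
  unfold probOf
  apply div_le_one_of_le₀
  · exact_mod_cast Finset.card_filter_le _ _
  · positivity

lemma aux_main_bound (k M n : ℕ) (ε lam : ℝ) (hk : 4096 ≤ k) (hε0 : 0 < ε) (h4 : 4 < lam)
    (hlk : lam ≤ k) (hε1 : ε ≤ ((k:ℝ)^3)⁻¹)
    (hεl : ε ^ lam ≤ (Real.exp 1)⁻¹ * ((2*Real.exp 1)^(4*k))⁻¹)
    (hM : (M:ℝ) ≤ 2^k * Real.log 2 * n) (hn : (k:ℝ) ≤ ε * n) :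
    1 - (1/2:ℝ)^(⌊ε*(n:ℝ)⌋₊) ≤ probOf n M k (CoreP n M k ε lam) := by
  have hk1r : (4096:ℝ) ≤ k := by exact_mod_cast hk
  have hk0 : (0:ℝ) < k := by linarith
  have hεn_pos : (0:ℝ) < ε * n := lt_of_lt_of_le (by linarith) hn
  have hn0 : 0 < n := by
    rcases Nat.eq_zero_or_pos n with h | h
    · subst h; norm_num at hεn_pos
    · exact h
  have hn0r : (0:ℝ) < n := by exact_mod_cast hn0
  have hlg0 : 0 < Real.log 2 := Real.log_pos (by norm_num)
  set z0 := ⌊ε*(n:ℝ)⌋₊ with hz0def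
  set t := z0 + 1 with htdef
  set L := ⌈lam⌉₊ with hLdef
  have hL5 : 5 ≤ L := by
    have : (4:ℕ) < ⌈lam⌉₊ := by rw [Nat.lt_ceil]; exact_mod_cast h4
    omega
  have hLk : L ≤ k := by rw [hLdef, Nat.ceil_le]; exact_mod_cast hlk
  have hz0r : (z0:ℝ) ≤ ε * n := Nat.floor_le hεn_pos.le
  have htr_le : (t:ℝ) ≤ ε*n + 1 := by
    rw [htdef]; push_cast; linarith
  have htr_gt : ε*n < (t:ℝ) := by
    rw [htdef]; push_cast; exact Nat.lt_floor_add_one _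
  have ht_pos : 0 < t := Nat.succ_pos z0
  have htr0 : (0:ℝ) < t := by exact_mod_cast ht_pos
  -- cardinality of formula space
  have hKpos : (0:ℝ) < (Fintype.card (KFormula n M k) : ℝ) := by
    rw [aux_card_univ]
    have : 0 < ((n*2)^k)^M := pow_pos (pow_pos (by omega) k) M
    exact_mod_cast this
  -- complement reduction
  have hcompl : probOf n M k (CoreP n M k ε lam)
      = 1 - ((Finset.univ.filter fun Φ : KFormula n M k => ¬ CoreP n M k ε lam Φ).card : ℝ)
          / (Fintype.card (KFormula n M k) : ℝ) := by
    unfold probOf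
    have hsum := Finset.card_filter_add_card_filter_not
      (s := (Finset.univ : Finset (KFormula n M k))) (p := CoreP n M k ε lam)
    rw [Finset.card_univ] at hsum
    have hsumr : ((Finset.univ.filter fun Φ : KFormula n M k => CoreP n M k ε lam Φ).card : ℝ)
        + ((Finset.univ.filter fun Φ : KFormula n M k => ¬ CoreP n M k ε lam Φ).card : ℝ)
        = (Fintype.card (KFormula n M k) : ℝ) := by exact_mod_cast hsum
    rw [eq_sub_iff_add_eq, ← add_div, div_eq_one_iff_eq (ne_of_gt hKpos)]
    exact hsumr
  rw [hcompl]
  have hgoal_red : ((Finset.univ.filter fun Φ : KFormula n M k => ¬ CoreP n M k ε lam Φ).card : ℝ)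
      / (Fintype.card (KFormula n M k) : ℝ) ≤ (1/2:ℝ)^z0 → 
      1 - (1/2:ℝ)^z0 ≤ 1 - ((Finset.univ.filter fun Φ : KFormula n M k => ¬ CoreP n M k ε lam Φ).card : ℝ)
      / (Fintype.card (KFormula n M k) : ℝ) := fun h => by linarith
  apply hgoal_red
  rcases Nat.lt_or_ge M t with hMt | htM
  · -- M < t : every formula is good
    have hempty : (Finset.univ.filter fun Φ : KFormula n M k => ¬ CoreP n M k ε lam Φ) = ∅ := by
      rw [Finset.filter_eq_empty_iff]
      intro Φ _
      rw [not_not]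
      intro Z hZ l i hinj hout hcond
      have hlM : l ≤ M := by
        have := Fintype.card_le_of_injective i hinj
        simpa using this
      have hlz0 : l ≤ z0 := Nat.lt_succ_iff.mp (lt_of_le_of_lt hlM hMt)
      have : (l:ℝ) ≤ (z0:ℝ) := by exact_mod_cast hlz0
      linarith
    rw [hempty]
    simp only [Finset.card_empty, Nat.cast_zero, zero_div]
    positivity
  · -- main case : t ≤ M
    set z' := min z0 (M - t) with hz'def
    set q := z' + t with hqdef
    set w := k * z' + (k - L) * t with hwdef
    have hz'z0 : z' ≤ z0 := min_le_left _ _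
    have hz't : z' < t := lt_of_le_of_lt hz'z0 (Nat.lt_succ_self z0)
    have hqM : q ≤ M := by
      have h1 : z' ≤ M - t := min_le_right _ _
      omega
    have hw_kq : w + L * t = k * q := by
      have h1 : (k - L) + L = k := Nat.sub_add_cancel hLk
      calc w + L * t = k * z' + ((k - L) + L) * t := by rw [hwdef]; ring
        _ = k * z' + k * t := by rw [h1]
        _ = k * q := by rw [hqdef]; ring
    have hw_le2kt : w ≤ (2*k - L) * t := by
      have h1 : k * z' ≤ k * t := Nat.mul_le_mul_left k (le_of_lt hz't)
      have h2 : (k + (k - L)) = 2*k - L := by omega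
      calc w ≤ k * t + (k - L) * t := by
            rw [hwdef]; exact Nat.add_le_add_right h1 _
        _ = (k + (k - L)) * t := by rw [Nat.add_mul]
        _ = (2*k - L) * t := by rw [h2]
    -- real bounds on w
    have hkLr : ((k - L : ℕ):ℝ) ≤ (k:ℝ) := by
      have : (k - L) ≤ k := Nat.sub_le _ _
      exact_mod_cast this
    have hz'r : ((z':ℕ):ℝ) ≤ ε * n := le_trans (by exact_mod_cast hz'z0) hz0r
    have hw3 : (w:ℝ) ≤ 3*(k:ℝ)*(ε*n) := by
      have hcast : (w:ℝ) = (k:ℝ) * z' + ((k - L:ℕ):ℝ) * t := by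
        rw [hwdef]; push_cast; ring
      have h1 : (k:ℝ) * z' ≤ (k:ℝ) * (ε*n) :=
        mul_le_mul_of_nonneg_left hz'r (le_of_lt hk0)
      have h2 : ((k - L:ℕ):ℝ) * t ≤ (k:ℝ) * (ε*n+1) := by
        apply mul_le_mul hkLr htr_le (by positivity) (le_of_lt hk0)
      have h3 : (k:ℝ) ≤ (k:ℝ) * (ε*n) := by nlinarith
      rw [hcast]
      nlinarith
    have hw_n : w ≤ n := by
      have h1 : 3*(k:ℝ)*(ε*n) ≤ 3*(k:ℝ)*(((k:ℝ)^3)⁻¹ * n) := by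
        apply mul_le_mul_of_nonneg_left _ (by positivity)
        apply mul_le_mul_of_nonneg_right hε1 (le_of_lt hn0r)
      have h2 : 3*(k:ℝ)*(((k:ℝ)^3)⁻¹ * n) ≤ (n:ℝ) := by
        rw [show 3*(k:ℝ)*(((k:ℝ)^3)⁻¹ * n) = 3 * (n:ℝ) / ((k:ℝ)^2) from by field_simp]
        rw [div_le_iff₀ (by positivity)]
        nlinarith
      have : (w:ℝ) ≤ (n:ℝ) := by linarith
      exact_mod_cast this
    have hwn_div : (w:ℝ)/n ≤ 3*(k:ℝ)*ε := by
      rw [div_le_iff₀ hn0r]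
      calc (w:ℝ) ≤ 3*(k:ℝ)*(ε*n) := hw3
        _ = 3*(k:ℝ)*ε*n := by ring
    -- the covering family
    set pairsSet := ((Finset.univ.powersetCard z') ×ˢ (Finset.univ.powersetCard t)).filter
      (fun p : Finset (Fin M) × Finset (Fin M) => Disjoint p.1 p.2) with hpairs
    set cover := pairsSet.biUnion (fun p => (Finset.univ.powersetCard w).biUnion
      (fun Wf : Finset (Fin n) => Finset.univ.filter
        (fun Φ : KFormula n M k => ∀ i ∈ p.1 ∪ p.2, ∀ j, (Φ i j).1 ∈ Wf))) with hcover
    have hsubcover : (Finset.univ.filter fun Φ : KFormula n M k => ¬ CoreP n M k ε lam Φ)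
        ⊆ cover := by
      intro Φ hΦ
      rw [Finset.mem_filter] at hΦ
      obtain ⟨Z, T, hZc, hTc, hdisj, hvars⟩ :=
        aux_stepA Φ L lam ε hεn_pos.le hLdef hΦ.2
      have hZM : Z.card ≤ M - t := by
        have h1 : (Z ∪ T).card = Z.card + T.card := Finset.card_union_of_disjoint hdisj
        have h2 : (Z ∪ T).card ≤ M := by
          calc (Z ∪ T).card ≤ (Finset.univ : Finset (Fin M)).card := Finset.card_le_univ _
            _ = M := by simp
        omega
      have hZz' : Z.card ≤ z' := le_min hZc hZM
      have hZsub : Z ⊆ Finset.univ \ T := by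
        rw [Finset.subset_sdiff]
        exact ⟨Finset.subset_univ _, hdisj⟩
      have hz'le : z' ≤ (Finset.univ \ T).card := by
        rw [Finset.card_sdiff_of_subset (Finset.subset_univ _)]
        simp only [Finset.card_univ, Fintype.card_fin]
        rw [hTc]
        exact min_le_right _ _
      obtain ⟨Z', hZZ', hZ'sub, hZ'card⟩ := Finset.exists_subsuperset_card_eq hZsub hZz' hz'le
      have hdisj' : Disjoint Z' T := (Finset.subset_sdiff.1 hZ'sub).2
      have hvars' : (varsOf Φ (Z' ∪ T)).card ≤ w := by
        have hsub1 : Z' ∪ T ⊆ (Z ∪ T) ∪ (Z' \ Z) := by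
          intro x hx
          rw [Finset.mem_union] at hx
          rcases hx with hx | hx
          · by_cases hxz : x ∈ Z
            · exact Finset.mem_union_left _ (Finset.mem_union_left _ hxz)
            · exact Finset.mem_union_right _ (Finset.mem_sdiff.2 ⟨hx, hxz⟩)
          · exact Finset.mem_union_left _ (Finset.mem_union_right _ hx)
        have h1 : (varsOf Φ (Z' ∪ T)).card ≤ (varsOf Φ ((Z ∪ T) ∪ (Z' \ Z))).card :=
          Finset.card_le_card (aux_varsOf_mono Φ hsub1)
        have h2 : varsOf Φ ((Z ∪ T) ∪ (Z' \ Z)) = varsOf Φ (Z ∪ T) ∪ varsOf Φ (Z' \ Z) :=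
          aux_varsOf_union Φ _ _
        have h3 : (varsOf Φ ((Z ∪ T) ∪ (Z' \ Z))).card
            ≤ (varsOf Φ (Z ∪ T)).card + (varsOf Φ (Z' \ Z)).card := by
          rw [h2]; exact Finset.card_union_le _ _
        have h4 : (varsOf Φ (Z' \ Z)).card ≤ k * (z' - Z.card) := by
          have := aux_varsOf_card_le Φ (Z' \ Z)
          rwa [Finset.card_sdiff_of_subset hZZ', hZ'card] at this
        have h5 : k * Z.card + k * (z' - Z.card) = k * z' := by
          rw [← Nat.mul_add, Nat.add_sub_cancel' hZz']
        calc (varsOf Φ (Z' ∪ T)).card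
            ≤ (varsOf Φ (Z ∪ T)).card + (varsOf Φ (Z' \ Z)).card := le_trans h1 h3
          _ ≤ (k * Z.card + (k - L) * t) + k * (z' - Z.card) := Nat.add_le_add hvars h4
          _ = (k * Z.card + k * (z' - Z.card)) + (k - L) * t := by ring
          _ = w := by rw [h5, hwdef]
      obtain ⟨Wf, _, _, hWcard⟩ := Finset.exists_subsuperset_card_eq
        (Finset.subset_univ (varsOf Φ (Z' ∪ T))) hvars'
        (by simp only [Finset.card_univ, Fintype.card_fin]; exact hw_n)
      rename_i hWsub hWuniv
      rw [hcover, Finset.mem_biUnion]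
      refine ⟨(Z', T), ?_, ?_⟩
      · rw [hpairs, Finset.mem_filter, Finset.mem_product]
        exact ⟨⟨Finset.mem_powersetCard.2 ⟨Finset.subset_univ _, hZ'card⟩,
          Finset.mem_powersetCard.2 ⟨Finset.subset_univ _, hTc⟩⟩, hdisj'⟩
      · rw [Finset.mem_biUnion]
        refine ⟨Wf, Finset.mem_powersetCard.2 ⟨Finset.subset_univ _, hWcard⟩, ?_⟩
        rw [Finset.mem_filter]
        refine ⟨Finset.mem_univ _, ?_⟩
        intro i hi j
        apply hWsub
        exact Finset.mem_biUnion.2 ⟨i, hi, Finset.mem_image.2 ⟨j, Finset.mem_univ j, rfl⟩⟩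
    -- counting the cover
    have hcount1 : ∀ p ∈ pairsSet, ∀ Wf ∈ (Finset.univ : Finset (Fin n)).powersetCard w,
        (Finset.univ.filter
          (fun Φ : KFormula n M k => ∀ i ∈ p.1 ∪ p.2, ∀ j, (Φ i j).1 ∈ Wf)).card
          = ((w*2)^k)^q * ((n*2)^k)^(M-q) := by
      intro p hp Wf hWf
      rw [hpairs, Finset.mem_filter, Finset.mem_product] at hp
      obtain ⟨⟨hp1, hp2⟩, hpd⟩ := hp
      rw [Finset.mem_powersetCard] at hp1 hp2 hWf
      have hcardU : (p.1 ∪ p.2).card = q := by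
        rw [Finset.card_union_of_disjoint hpd, hp1.2, hp2.2]
      rw [aux_count n M k (p.1 ∪ p.2) Wf, hcardU, hWf.2]
    have hcard_bound : ((Finset.univ.filter fun Φ : KFormula n M k => ¬ CoreP n M k ε lam Φ).card : ℕ)
        ≤ (M.choose z' * M.choose t) * ((n.choose w) * (((w*2)^k)^q * ((n*2)^k)^(M-q))) := by
      calc (Finset.univ.filter fun Φ : KFormula n M k => ¬ CoreP n M k ε lam Φ).card
          ≤ cover.card := Finset.card_le_card hsubcover
        _ ≤ ∑ p ∈ pairsSet, ((Finset.univ.powersetCard w).biUnion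
            (fun Wf : Finset (Fin n) => Finset.univ.filter
              (fun Φ : KFormula n M k => ∀ i ∈ p.1 ∪ p.2, ∀ j, (Φ i j).1 ∈ Wf))).card := by
            rw [hcover]; exact Finset.card_biUnion_le
        _ ≤ ∑ p ∈ pairsSet, ((n.choose w) * (((w*2)^k)^q * ((n*2)^k)^(M-q))) := by
            apply Finset.sum_le_sum
            intro p hp
            calc ((Finset.univ.powersetCard w).biUnion _).card
                ≤ ∑ Wf ∈ Finset.univ.powersetCard w,
                  (Finset.univ.filter
                    (fun Φ : KFormula n M k => ∀ i ∈ p.1 ∪ p.2, ∀ j, (Φ i j).1 ∈ Wf)).card :=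
                  Finset.card_biUnion_le
              _ ≤ (Finset.univ.powersetCard w).card • ((((w*2)^k)^q * ((n*2)^k)^(M-q))) := by
                  apply Finset.sum_le_card_nsmul
                  intro Wf hWf
                  rw [hcount1 p hp Wf hWf]
              _ = (n.choose w) * (((w*2)^k)^q * ((n*2)^k)^(M-q)) := by
                  rw [smul_eq_mul, Finset.card_powersetCard, Finset.card_univ, Fintype.card_fin]
        _ ≤ pairsSet.card • ((n.choose w) * (((w*2)^k)^q * ((n*2)^k)^(M-q))) := by
            apply Finset.sum_le_card_nsmul
            intro p _
            exact le_rfl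
        _ ≤ (M.choose z' * M.choose t) * ((n.choose w) * (((w*2)^k)^q * ((n*2)^k)^(M-q))) := by
            rw [smul_eq_mul]
            apply Nat.mul_le_mul_right
            calc pairsSet.card ≤ ((Finset.univ.powersetCard z') ×ˢ
                (Finset.univ.powersetCard t)).card := Finset.card_filter_le _ _
              _ = M.choose z' * M.choose t := by
                  rw [Finset.card_product, Finset.card_powersetCard, Finset.card_powersetCard]
                  simp
    -- pass to the reals
    set Brat := Real.exp 1 * 2^k * Real.log 2 / ε with hBrat
    have hfrac : ((Finset.univ.filter fun Φ : KFormula n M k => ¬ CoreP n M k ε lam Φ).card : ℝ)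
        / (Fintype.card (KFormula n M k) : ℝ)
        ≤ ((M.choose z' : ℝ) * (M.choose t) * (n.choose w)) * (((w:ℝ)/n)^(k*q)) := by
      have hnum : ((Finset.univ.filter fun Φ : KFormula n M k => ¬ CoreP n M k ε lam Φ).card : ℝ)
          ≤ ((M.choose z' * M.choose t) * ((n.choose w) * (((w*2)^k)^q * ((n*2)^k)^(M-q))) : ℕ) := by
        exact_mod_cast hcard_bound
      have hKcast : (Fintype.card (KFormula n M k) : ℝ) = ((n:ℝ)*2)^(k*M) := by
        rw [aux_card_univ]
        push_cast [← pow_mul]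
        ring_nf
      have hsplit : ((n:ℝ)*2)^(k*M) = ((n:ℝ)*2)^(k*q) * ((n:ℝ)*2)^(k*(M-q)) := by
        rw [← pow_add]
        congr 1
        have : q + (M - q) = M := Nat.add_sub_cancel' hqM
        calc k*M = k*(q + (M-q)) := by rw [this]
          _ = k*q + k*(M-q) := Nat.mul_add k q (M-q)
      have hn2pos : (0:ℝ) < (n:ℝ)*2 := by linarith
      have hQ : (((M.choose z' * M.choose t) * ((n.choose w) * (((w*2)^k)^q * ((n*2)^k)^(M-q))) : ℕ) : ℝ)
          = (((M.choose z' : ℝ) * (M.choose t) * (n.choose w)) * (((w:ℝ)/n)^(k*q)))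
            * (Fintype.card (KFormula n M k) : ℝ) := by
        rw [hKcast, hsplit]
        push_cast [← pow_mul]
        have e1 : ((w:ℝ)/n)^(k*q) * ((n:ℝ)*2)^(k*q) = ((w:ℝ)*2)^(k*q) := by
          rw [← mul_pow]
          congr 1
          field_simp
        rw [show (((M.choose z' : ℝ) * (M.choose t) * (n.choose w)) * (((w:ℝ)/n)^(k*q)))
            * (((n:ℝ)*2)^(k*q) * ((n:ℝ)*2)^(k*(M-q)))
            = ((M.choose z' : ℝ) * (M.choose t) * ((n.choose w) *
              ((((w:ℝ)/n)^(k*q) * ((n:ℝ)*2)^(k*q)) * ((n:ℝ)*2)^(k*(M-q))))) from by ring, e1]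
        try ring
      rw [div_le_iff₀ hKpos]
      calc ((Finset.univ.filter fun Φ : KFormula n M k => ¬ CoreP n M k ε lam Φ).card : ℝ)
          ≤ _ := hnum
        _ = _ := hQ
    -- final estimate
    have hT0 : ((M.choose z' : ℝ) * (M.choose t) * (n.choose w)) * (((w:ℝ)/n)^(k*q))
        ≤ (1/2:ℝ)^t := by
      rcases Nat.eq_zero_or_pos w with hw0 | hw1
      · have hkq0 : k*q ≠ 0 := by
          have : 0 < k := by omega
          have : 0 < q := by omega
          positivity
        rw [hw0]
        simp only [Nat.cast_zero, zero_div, zero_pow hkq0, mul_zero]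
        positivity
      · have hw1r : (1:ℝ) ≤ w := by exact_mod_cast hw1
        have hwpos : (0:ℝ) < w := by linarith
        have hC1 : (M.choose z' : ℝ) ≤ (Real.exp 1 * M / t)^t :=
          aux_choose_le M z' t (le_of_lt hz't) htM (by omega)
        have hC2 : (M.choose t : ℝ) ≤ (Real.exp 1 * M / t)^t :=
          aux_choose_le M t t le_rfl htM (by omega)
        have hC3 : (n.choose w : ℝ) ≤ (Real.exp 1 * n / w)^w :=
          aux_choose_le n w w le_rfl hw_n hw1
        have hBq : Real.exp 1 * M / t ≤ Brat := by
          rw [hBrat, div_le_div_iff₀ htr0 hε0]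
          have h1 : (M:ℝ)*ε ≤ (2^k * Real.log 2 * n)*ε :=
            mul_le_mul_of_nonneg_right hM hε0.le
          have h2 : 2^k * Real.log 2 * (ε*n) ≤ 2^k * Real.log 2 * t :=
            mul_le_mul_of_nonneg_left htr_gt.le (by positivity)
          have h3 : (M:ℝ)*ε ≤ 2^k * Real.log 2 * t := by nlinarith
          nlinarith [Real.exp_pos 1]
        have hBq0 : (0:ℝ) ≤ Real.exp 1 * M / t := by positivity
        have hBrat0 : (0:ℝ) < Brat := by rw [hBrat]; positivity
        -- decompose the main product
        have hD1 : (Real.exp 1 * n / w)^w * ((w:ℝ)/n)^(k*q)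
            = Real.exp 1 ^ w * ((w:ℝ)/n)^(L*t) := by
          have e1 : (Real.exp 1 * n / w) = Real.exp 1 * ((n:ℝ)/w) := by ring
          have e2 : ((w:ℝ)/n)^(k*q) = ((w:ℝ)/n)^w * ((w:ℝ)/n)^(L*t) := by
            rw [← pow_add]
            congr 1
            exact hw_kq.symm
          rw [e1, mul_pow, e2]
          have e3 : ((n:ℝ)/w)^w * (((w:ℝ)/n)^w * ((w:ℝ)/n)^(L*t))
              = (((n:ℝ)/w) * ((w:ℝ)/n))^w * ((w:ℝ)/n)^(L*t) := by
            rw [mul_pow]; ring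
          have e4 : ((n:ℝ)/w) * ((w:ℝ)/n) = 1 := by field_simp
          rw [mul_assoc, e3, e4, one_pow, one_mul]
        have hE1 : Real.exp 1 ^ w ≤ (Real.exp 1 ^ (2*k - L))^t := by
          rw [← pow_mul]
          apply pow_le_pow_right₀ (by linarith [Real.add_one_le_exp (1:ℝ)]) hw_le2kt
        have hE2 : ((w:ℝ)/n)^(L*t) ≤ ((3*(k:ℝ)*ε)^L)^t := by
          rw [← pow_mul]
          apply pow_le_pow_left₀ (by positivity) hwn_div
        calc ((M.choose z' : ℝ) * (M.choose t) * (n.choose w)) * (((w:ℝ)/n)^(k*q))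
            ≤ ((Real.exp 1 * M / t)^t * (Real.exp 1 * M / t)^t * (Real.exp 1 * n / w)^w)
              * (((w:ℝ)/n)^(k*q)) := by
              apply mul_le_mul_of_nonneg_right _ (by positivity)
              apply mul_le_mul _ hC3 (by positivity) (by positivity)
              exact mul_le_mul hC1 hC2 (by positivity) (by positivity)
          _ = ((Real.exp 1 * M / t)^t * (Real.exp 1 * M / t)^t)
              * ((Real.exp 1 * n / w)^w * ((w:ℝ)/n)^(k*q)) := by ring
          _ = ((Real.exp 1 * M / t)^t * (Real.exp 1 * M / t)^t)
              * (Real.exp 1 ^ w * ((w:ℝ)/n)^(L*t)) := by rw [hD1]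
          _ ≤ (Brat^t * Brat^t) * ((Real.exp 1 ^ (2*k - L))^t * ((3*(k:ℝ)*ε)^L)^t) := by
              apply mul_le_mul
              · apply mul_le_mul (pow_le_pow_left₀ hBq0 hBq t) (pow_le_pow_left₀ hBq0 hBq t)
                  (by positivity) (by positivity)
              · apply mul_le_mul hE1 hE2 (by positivity) (by positivity)
              · positivity
              · positivity
          _ = (Brat^2 * Real.exp 1 ^ (2*k - L) * (3*(k:ℝ)*ε)^L)^t := by
              rw [mul_pow, mul_pow, ← pow_mul]
              ring
          _ ≤ (1/2:ℝ)^t := by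
              apply pow_le_pow_left₀ (by positivity)
              rw [hBrat]
              exact aux_num k L lam ε hk h4 hlk hLdef hε0 hε1 hεl
      -- end w ≥ 1
    have hhalf : ((1:ℝ)/2)^t ≤ ((1:ℝ)/2)^z0 := by
      rw [htdef, pow_succ]
      have h0 : (0:ℝ) ≤ (1/2:ℝ)^z0 := by positivity
      nlinarith
    calc ((Finset.univ.filter fun Φ : KFormula n M k => ¬ CoreP n M k ε lam Φ).card : ℝ)
        / (Fintype.card (KFormula n M k) : ℝ)
        ≤ ((M.choose z' : ℝ) * (M.choose t) * (n.choose w)) * (((w:ℝ)/n)^(k*q)) := hfrac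
      _ ≤ (1/2:ℝ)^t := hT0
      _ ≤ (1/2:ℝ)^z0 := hhalf

/-- **Lemma 2.4.** There is `k₀ > 0` such that for all `k ≥ k₀`, all reals `ε > 0` and
`4 < λ ≤ k` with `ε ≤ k⁻³` and `ε^λ ≤ e⁻¹ (2e)^{-4k}`, and all `m = m(n)` with
`m/n ≤ 2^k ln 2`, whp: for every `Z ⊆ [m]` with `|Z| ≤ εn` and every sequence
`i_1,…,i_l` of pairwise distinct indices in `[m] ∖ Z` such that
`|N(Φ_{i_s}) ∩ N(Φ_{Z ∪ {i_j : j < s}})| ≥ λ` for all `s`, one has `l ≤ εn`. -/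
theorem whp_core_expansion :
    ∃ k0 : ℕ, 0 < k0 ∧ ∀ k : ℕ, k0 ≤ k →
      ∀ ε lam : ℝ, 0 < ε → 4 < lam → lam ≤ k →
        ε ≤ ((k : ℝ) ^ 3)⁻¹ →
        ε ^ lam ≤ (Real.exp 1)⁻¹ * ((2 * Real.exp 1) ^ (4 * k))⁻¹ →
        ∀ m : ℕ → ℕ, (∀ n : ℕ, (m n : ℝ) / n ≤ 2 ^ k * Real.log 2) →
          Filter.Tendsto
            (fun n : ℕ =>
              probOf n (m n) k (fun Φ =>
                ∀ Z : Finset (Fin (m n)), (Z.card : ℝ) ≤ ε * n →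
                  ∀ (l : ℕ) (i : Fin l → Fin (m n)),
                    Function.Injective i →
                    (∀ s, i s ∉ Z) →
                    (∀ s : Fin l,
                      lam ≤ ((clauseVars Φ (i s) ∩
                        varsOf Φ (Z ∪ (Finset.univ.filter fun j : Fin l => j < s).image i)).card : ℝ)) →
                    (l : ℝ) ≤ ε * n))
            Filter.atTop (nhds 1) := by
  refine ⟨4096, by norm_num, ?_⟩
  intro k hk ε lam hε0 h4 hlk hε1 hεl m hm
  have hglow : Filter.Tendsto (fun n : ℕ => 1 - (1/2:ℝ)^(⌊ε*(n:ℝ)⌋₊)) Filter.atTop (nhds 1) := by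
    have h1 : Filter.Tendsto (fun n : ℕ => ε * (n:ℝ)) Filter.atTop Filter.atTop := by
      apply Filter.Tendsto.const_mul_atTop hε0
      exact tendsto_natCast_atTop_atTop
    have h2 : Filter.Tendsto (fun n : ℕ => ⌊ε*(n:ℝ)⌋₊) Filter.atTop Filter.atTop :=
      tendsto_nat_floor_atTop.comp h1
    have h3 : Filter.Tendsto (fun j : ℕ => (1/2:ℝ)^j) Filter.atTop (nhds 0) :=
      tendsto_pow_atTop_nhds_zero_of_lt_one (by norm_num) (by norm_num)
    have h4' : Filter.Tendsto (fun n : ℕ => (1/2:ℝ)^(⌊ε*(n:ℝ)⌋₊)) Filter.atTop (nhds 0) :=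
      h3.comp h2
    have := (tendsto_const_nhds (x := (1:ℝ)) (f := Filter.atTop (α := ℕ))).sub h4'
    simpa using this
  apply tendsto_of_tendsto_of_tendsto_of_le_of_le' hglow tendsto_const_nhds
  · -- eventual lower bound
    have hev : ∀ᶠ n : ℕ in Filter.atTop, (k:ℝ) ≤ ε * n := by
      have h1 : Filter.Tendsto (fun n : ℕ => ε * (n:ℝ)) Filter.atTop Filter.atTop := by
        apply Filter.Tendsto.const_mul_atTop hε0
        exact tendsto_natCast_atTop_atTop
      exact h1.eventually_ge_atTop _
    filter_upwards [hev, Filter.eventually_ge_atTop 1] with n hn hn1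
    have hn0r : (0:ℝ) < n := by exact_mod_cast hn1
    have hMn : ((m n : ℕ):ℝ) ≤ 2^k * Real.log 2 * n := by
      have := hm n
      rw [div_le_iff₀ hn0r] at this
      linarith
    exact aux_main_bound k (m n) n ε lam hk hε0 h4 hlk hε1 hεl hMn hn
  · -- probOf ≤ 1 always
    filter_upwards with n
    exact aux_probOf_le_one _ _ _ _
end

section
/- Let k ≥ 3, n > 1, m ≥ 1, let Z, I ⊆ [m] be disjoint sets of clause indices, and let Y ⊆ V be a set of variables. For the random formula Φ = Φ_k(n,m), the probability of the event that N(Φ_i) ⊆ N(Φ_Z) ∪ Y for all i ∈ I is at most ((k·|Z| + |Y|)/n)^{k·|I|}. -/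
open Finset
open scoped Classical

/-- **First-moment bound in Lemma 2.4.** For disjoint sets of clause indices `Z, I` and a
set of variables `Y`, the probability that `N(Φ_i) ⊆ N(Φ_Z) ∪ Y` for all `i ∈ I` is at
most `((k|Z| + |Y|)/n)^{k|I|}`. -/
theorem prob_clauses_inside {n m k : ℕ} (hk : 3 ≤ k) (hn : 1 < n) (hm : 1 ≤ m)
    (Z I : Finset (Fin m)) (hZI : Disjoint Z I) (Y : Finset (Fin n)) :
    probOf n m k (fun Φ => ∀ i ∈ I, clauseVars Φ i ⊆ varsOf Φ Z ∪ Y)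
      ≤ (((k * Z.card + Y.card : ℕ) : ℝ) / n) ^ (k * I.card) := by
  classical
  set A := k * Z.card + Y.card with hA
  set K := k * I.card with hK
  set M := m - I.card with hM
  have hIm : I.card ≤ m := by simpa using Finset.card_le_univ I
  set r : KFormula n m k → ({i : Fin m // i ∉ I} → Fin k → Fin n × Bool) :=
    fun Φ i j => Φ i.1 j with hr
  rw [probOf]
  beta_reduce
  rw [Finset.filter_congr_decidable]
  set E := (Finset.univ.filter fun Φ : KFormula n m k =>
      ∀ i ∈ I, clauseVars Φ i ⊆ varsOf Φ Z ∪ Y) with hE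
  -- fiber bound
  have fiber_bound : ∀ g : ({i : Fin m // i ∉ I} → Fin k → Fin n × Bool),
      (E.filter fun Φ => r Φ = g).card ≤ (2 * A) ^ K := by
    intro g
    set Φ₀ : KFormula n m k := fun i =>
      if h : i ∈ I then fun _ => (⟨0, by omega⟩, true) else g ⟨i, h⟩ with hΦ₀
    set W := varsOf Φ₀ Z ∪ Y with hW
    have hWA : W.card ≤ A := by
      calc W.card ≤ (varsOf Φ₀ Z).card + Y.card := Finset.card_union_le _ _
        _ ≤ A := by
          refine Nat.add_le_add_right ?_ _
          calc (varsOf Φ₀ Z).card ≤ ∑ i ∈ Z, (clauseVars Φ₀ i).card :=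
                Finset.card_biUnion_le
            _ ≤ ∑ _i ∈ Z, k := Finset.sum_le_sum fun i _ => by
                simpa [clauseVars] using
                  Finset.card_image_le (s := (Finset.univ : Finset (Fin k)))
                    (f := fun j => (Φ₀ i j).1)
            _ = k * Z.card := by rw [Finset.sum_const, smul_eq_mul, mul_comm]
    have hvars : ∀ Φ : KFormula n m k, r Φ = g → varsOf Φ Z = varsOf Φ₀ Z := by
      intro Φ hg
      apply Finset.biUnion_congr rfl
      intro i hi
      have hiI : i ∉ I := fun h => (Finset.disjoint_left.mp hZI hi) h
      have hΦi : Φ₀ i = fun j => Φ i j := by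
        simp only [hΦ₀, dif_neg hiI]
        exact (congrFun hg ⟨i, hiI⟩).symm
      simp [clauseVars, hΦi]
    set t := Fintype.piFinset (fun _ : {i : Fin m // i ∈ I} =>
      Fintype.piFinset (fun _ : Fin k => W ×ˢ (Finset.univ : Finset Bool))) with ht
    have hmapsto : ∀ Φ ∈ E.filter (fun Φ => r Φ = g),
        (fun (i : {i : Fin m // i ∈ I}) (j : Fin k) => Φ i.1 j) ∈ t := by
      intro Φ hΦ
      simp only [hE, Finset.mem_filter, Finset.mem_univ, true_and] at hΦ
      obtain ⟨hev, hg⟩ := hΦ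
      rw [Fintype.mem_piFinset]
      intro i
      rw [Fintype.mem_piFinset]
      intro j
      rw [Finset.mem_product]
      refine ⟨?_, Finset.mem_univ _⟩
      have h1 : (Φ i.1 j).1 ∈ clauseVars Φ i.1 :=
        Finset.mem_image_of_mem _ (Finset.mem_univ j)
      have h2 := hev i.1 i.2 h1
      rw [hvars Φ hg] at h2
      exact h2
    have hinj : Set.InjOn (fun (Φ : KFormula n m k) (i : {i : Fin m // i ∈ I}) (j : Fin k) => Φ i.1 j)
        ↑(E.filter fun Φ => r Φ = g) := by
      intro Φ hΦ Ψ hΨ heq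
      simp only [Finset.coe_filter, Set.mem_setOf_eq] at hΦ hΨ
      funext i j
      by_cases hi : i ∈ I
      · exact congrFun (congrFun heq ⟨i, hi⟩) j
      · have h1 : r Φ = g := hΦ.2
        have h2 : r Ψ = g := hΨ.2
        exact congrFun (congrFun (h1.trans h2.symm) ⟨i, hi⟩) j
    calc (E.filter fun Φ => r Φ = g).card ≤ t.card :=
          Finset.card_le_card_of_injOn _ hmapsto hinj
      _ ≤ (2 * A) ^ K := by
          rw [ht, Fintype.card_piFinset]
          have hinner : ∀ i : {i : Fin m // i ∈ I},
              (Fintype.piFinset (fun _ : Fin k =>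
                W ×ˢ (Finset.univ : Finset Bool))).card = (W.card * 2) ^ k := by
            intro i
            rw [Fintype.card_piFinset]
            simp [Finset.card_product]
          calc (∏ i : {i : Fin m // i ∈ I}, (Fintype.piFinset (fun _ : Fin k =>
                W ×ˢ (Finset.univ : Finset Bool))).card)
              = ((W.card * 2) ^ k) ^ I.card := by
                rw [Finset.prod_congr rfl (fun i _ => hinner i), Finset.prod_const,
                  Finset.card_univ, Fintype.card_coe]
            _ = (W.card * 2) ^ K := by rw [hK, ← pow_mul]
            _ ≤ (2 * A) ^ K := Nat.pow_le_pow_left (by omega) K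
  -- total count
  have hEcard : E.card ≤ (2 * n) ^ (k * M) * (2 * A) ^ K := by
    have hsplit := Finset.card_eq_sum_card_fiberwise
      (f := r) (s := E) (t := Finset.univ) (fun x _ => Finset.mem_univ _)
    rw [hsplit]
    calc (∑ g ∈ (Finset.univ : Finset ({i : Fin m // i ∉ I} → Fin k → Fin n × Bool)),
            (E.filter fun Φ => r Φ = g).card)
        ≤ ∑ _g ∈ (Finset.univ : Finset ({i : Fin m // i ∉ I} → Fin k → Fin n × Bool)),
            (2 * A) ^ K := Finset.sum_le_sum fun g _ => fiber_bound g
      _ = Fintype.card ({i : Fin m // i ∉ I} → Fin k → Fin n × Bool) * (2 * A) ^ K := by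
          rw [Finset.sum_const, Finset.card_univ, smul_eq_mul]
      _ = (2 * n) ^ (k * M) * (2 * A) ^ K := by
          congr 1
          have h1 : Fintype.card {i : Fin m // i ∉ I} = M := by
            rw [hM]
            have := Fintype.card_subtype_compl (p := fun i : Fin m => i ∈ I)
            simpa [Fintype.card_coe] using this
          rw [Fintype.card_fun, Fintype.card_fun, Fintype.card_prod, h1]
          simp only [Fintype.card_fin, Fintype.card_bool]
          rw [← pow_mul, mul_comm n 2]
      _ = (2 * n) ^ (k * M) * (2 * A) ^ K := rfl
  have hΩ : Fintype.card (KFormula n m k) = (2 * n) ^ (k * m) := by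
    rw [Fintype.card_fun, Fintype.card_fun, Fintype.card_prod]
    simp only [Fintype.card_fin, Fintype.card_bool]
    rw [← pow_mul, mul_comm n 2, mul_comm k m]
  -- conclude
  rw [hΩ]
  have hn0 : (0:ℝ) < (n : ℝ) := by exact_mod_cast Nat.lt_of_lt_of_le Nat.zero_lt_one hn.le
  have hCpos : (0:ℝ) < (((2 * n) ^ (k * m) : ℕ) : ℝ) := by positivity
  rw [div_le_iff₀ hCpos]
  have hmsum : M + I.card = m := Nat.sub_add_cancel hIm
  have hexp : k * m = k * M + K := by rw [hK, ← Nat.mul_add, hmsum]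
  calc (E.card : ℝ) ≤ (((2 * n) ^ (k * M) * (2 * A) ^ K : ℕ) : ℝ) := by
        exact_mod_cast hEcard
    _ = ((A : ℝ) / n) ^ K * (((2 * n) ^ (k * m) : ℕ) : ℝ) := by
        push_cast
        rw [hexp, pow_add]
        have h2A : ((A : ℝ) / n) ^ K * ((2 * (n:ℝ)) ^ K) = (2 * (A:ℝ)) ^ K := by
          rw [← mul_pow]
          congr 1
          field_simp
        rw [← h2A]
        ring
end

section
/- There exists a constant k_0 > 0 such that the following holds for all integers k ≥ k_0, all reals ε > 0 and λ with 4 < λ ≤ k satisfying ε ≤ k^{-3}, and all n, m with m/n ≤ 2^k·ln 2 such that εn and ε(k−λ)n are positive integers. For the random formula Φ = Φ_k(n,m), the probability that there exist sets Z ⊆ [m] with |Z| = εn, Y ⊆ V with |Y| = ε(k−λ)n, and I ⊆ [m]∖Z with |I| = εn such that N(Φ_i) ⊆ N(Φ_Z) ∪ Y for all i ∈ I, is at most ((2e)^{2k}·ε^{λ/2})^{εn}. -/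
open Finset
open scoped Classical

lemma clauseVars_congr {n m k : ℕ} {Φ Ψ : KFormula n m k} {i : Fin m} (h : Φ i = Ψ i) :
    clauseVars Φ i = clauseVars Ψ i := by
  unfold clauseVars; rw [h]

lemma varsOf_congr {n m k : ℕ} {Φ Ψ : KFormula n m k} {Z : Finset (Fin m)}
    (h : ∀ i ∈ Z, Φ i = Ψ i) : varsOf Φ Z = varsOf Ψ Z := by
  unfold varsOf
  exact Finset.biUnion_congr rfl (fun i hi => clauseVars_congr (h i hi))

lemma count_bound {n m k a b : ℕ} (hn : 0 < n)
    (Z I : Finset (Fin m)) (Y : Finset (Fin n))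
    (hdisj : Disjoint I Z) (hZ : Z.card = a) (hI : I.card = a) (hY : Y.card = b) :
    (Finset.univ.filter fun Φ : KFormula n m k =>
        ∀ i ∈ I, clauseVars Φ i ⊆ varsOf Φ Z ∪ Y).card
      ≤ ((n * 2) ^ k) ^ (m - a) * ((k * a + b) * 2) ^ (k * a) := by
  classical
  have h2a : a + a ≤ m := by
    have h1 : (I ∪ Z).card = a + a := by
      rw [Finset.card_union_of_disjoint hdisj, hI, hZ]
    have h2 : (I ∪ Z).card ≤ m := by
      simpa using Finset.card_le_card (Finset.subset_univ (I ∪ Z))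
    omega
  set c0 : Fin k → Fin n × Bool := fun _ => (⟨0, hn⟩, true) with hc0
  set W : Finset (Fin m → Fin k → Fin n × Bool) :=
    Fintype.piFinset (fun i : Fin m =>
      if i ∈ Z then (Finset.univ : Finset (Fin k → Fin n × Bool)) else {c0}) with hW
  set G : KFormula n m k → Finset (Fin k → Fin n × Bool) := fun w =>
    Fintype.piFinset (fun _ : Fin k =>
      Finset.univ.filter (fun l : Fin n × Bool => l.1 ∈ varsOf w Z ∪ Y)) with hG
  set box : KFormula n m k → Finset (KFormula n m k) := fun w =>
    Fintype.piFinset (fun i : Fin m =>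
      if i ∈ Z then {w i} else if i ∈ I then G w else Finset.univ) with hbox
  -- the subset step
  have hsub : (Finset.univ.filter fun Φ : KFormula n m k =>
      ∀ i ∈ I, clauseVars Φ i ⊆ varsOf Φ Z ∪ Y) ⊆ W.biUnion box := by
    intro Φ hΦ
    rw [Finset.mem_filter] at hΦ
    obtain ⟨-, hcond⟩ := hΦ
    set w : KFormula n m k := fun i => if i ∈ Z then Φ i else c0 with hw
    have hwZ : ∀ i ∈ Z, w i = Φ i := by
      intro i hi; simp [hw, hi]
    have hvars : varsOf w Z = varsOf Φ Z := varsOf_congr hwZ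
    refine Finset.mem_biUnion.2 ⟨w, ?_, ?_⟩
    · rw [hW, Fintype.mem_piFinset]
      intro i
      by_cases hi : i ∈ Z <;> simp [hw, hi]
    · rw [hbox, Fintype.mem_piFinset]
      intro i
      by_cases hiZ : i ∈ Z
      · simp only [hiZ, if_true]
        simp [hwZ i hiZ]
      · by_cases hiI : i ∈ I
        · simp only [hiZ, if_false, hiI, if_true]
          rw [hG, Fintype.mem_piFinset]
          intro j
          rw [Finset.mem_filter]
          refine ⟨Finset.mem_univ _, ?_⟩
          rw [hvars]
          exact hcond i hiI (Finset.mem_image.2 ⟨j, Finset.mem_univ _, rfl⟩)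
        · simp [hiZ, hiI]
  -- cardinality of boxes
  have hGcard : ∀ w : KFormula n m k, (G w).card ≤ ((k * a + b) * 2) ^ k := by
    intro w
    have hS : (varsOf w Z ∪ Y).card ≤ k * a + b := by
      have h1 : (varsOf w Z).card ≤ k * a := by
        unfold varsOf
        calc (Z.biUnion (clauseVars w)).card ≤ ∑ i ∈ Z, (clauseVars w i).card :=
              Finset.card_biUnion_le
          _ ≤ ∑ _i ∈ Z, k := by
              refine Finset.sum_le_sum fun i _ => ?_
              calc (clauseVars w i).card ≤ (Finset.univ : Finset (Fin k)).card :=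
                    Finset.card_image_le
                _ = k := by simp
          _ = k * a := by rw [Finset.sum_const, hZ]; ring
      calc (varsOf w Z ∪ Y).card ≤ (varsOf w Z).card + Y.card := Finset.card_union_le _ _
        _ ≤ k * a + b := by rw [hY]; omega
    have hfil : (Finset.univ.filter (fun l : Fin n × Bool => l.1 ∈ varsOf w Z ∪ Y))
        = (varsOf w Z ∪ Y) ×ˢ (Finset.univ : Finset Bool) := by
      ext ⟨v, s⟩
      simp [Finset.mem_product]
    have : (G w).card = ((varsOf w Z ∪ Y).card * 2) ^ k := by
      rw [hG]
      rw [Fintype.card_piFinset, hfil]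
      rw [Finset.prod_const, Finset.card_product]
      simp
    rw [this]
    exact Nat.pow_le_pow_left (by omega) k
  have hboxcard : ∀ w : KFormula n m k,
      (box w).card ≤ (((k * a + b) * 2) ^ k) ^ a * ((n * 2) ^ k) ^ (m - (a + a)) := by
    intro w
    rw [hbox, Fintype.card_piFinset]
    have hprod : ∀ i : Fin m,
        ((if i ∈ Z then {w i} else if i ∈ I then G w else (Finset.univ : Finset (Fin k → Fin n × Bool))).card)
        ≤ (if i ∈ I then ((k * a + b) * 2) ^ k else if i ∈ Z then 1 else (n * 2) ^ k) := by
      intro i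
      by_cases hiZ : i ∈ Z
      · have hiI : i ∉ I := fun h => (Finset.disjoint_left.1 hdisj h) hiZ
        simp [hiZ, hiI]
      · by_cases hiI : i ∈ I
        · simp only [hiZ, if_false, hiI, if_true]
          exact hGcard w
        · simp only [hiZ, hiI, if_false]
          apply le_of_eq
          simp [Fintype.card_fun, Fintype.card_prod, mul_comm]
    calc (∏ i : Fin m, (if i ∈ Z then ({w i} : Finset (Fin k → Fin n × Bool)) else if i ∈ I then G w else Finset.univ).card)
        ≤ ∏ i : Fin m, (if i ∈ I then ((k * a + b) * 2) ^ k else if i ∈ Z then 1 else (n * 2) ^ k) :=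
          Finset.prod_le_prod' fun i _ => hprod i
      _ = (((k * a + b) * 2) ^ k) ^ a * ((n * 2) ^ k) ^ (m - (a + a)) := by
          rw [← Finset.prod_mul_prod_compl I]
          have e1 : ∏ i ∈ I, (if i ∈ I then ((k * a + b) * 2) ^ k else if i ∈ Z then 1 else (n * 2) ^ k)
              = (((k * a + b) * 2) ^ k) ^ a := by
            rw [Finset.prod_eq_pow_card (fun i hi => if_pos hi), hI]
          have e2 : ∏ i ∈ Iᶜ, (if i ∈ I then ((k * a + b) * 2) ^ k else if i ∈ Z then 1 else (n * 2) ^ k)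
              = ((n * 2) ^ k) ^ (m - (a + a)) := by
            have hZc : Z ⊆ Iᶜ := by
              intro i hi
              simp only [Finset.mem_compl]
              exact fun h => (Finset.disjoint_left.1 hdisj h) hi
            rw [← Finset.prod_sdiff hZc]
            have e3 : ∏ i ∈ Z, (if i ∈ I then ((k * a + b) * 2) ^ k else if i ∈ Z then 1 else (n * 2) ^ k) = 1 := by
              apply Finset.prod_eq_one
              intro i hi
              have hiI : i ∉ I := fun h => (Finset.disjoint_left.1 hdisj h) hi
              simp [hi, hiI]
            have e4 : ∏ i ∈ Iᶜ \ Z, (if i ∈ I then ((k * a + b) * 2) ^ k else if i ∈ Z then 1 else (n * 2) ^ k)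
                = ((n * 2) ^ k) ^ (m - (a + a)) := by
              rw [Finset.prod_eq_pow_card (fun i hi => ?_)]
              · congr 1
                rw [Finset.card_sdiff_of_subset hZc, Finset.card_compl, hZ, hI]
                simp only [Fintype.card_fin]
                omega
              · rw [Finset.mem_sdiff, Finset.mem_compl] at hi
                simp [hi.1, hi.2]
            rw [e3, e4, mul_one]
          rw [e1, e2]
  have hWcard : W.card ≤ ((n * 2) ^ k) ^ a := by
    rw [hW, Fintype.card_piFinset]
    apply le_of_eq
    rw [← Finset.prod_mul_prod_compl Z]
    have e1 : ∏ i ∈ Z, (if i ∈ Z then (Finset.univ : Finset (Fin k → Fin n × Bool)) else {c0}).card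
        = ((n * 2) ^ k) ^ a := by
      have hval : ∀ i ∈ Z, ((if i ∈ Z then (Finset.univ : Finset (Fin k → Fin n × Bool)) else {c0}).card) = (n * 2) ^ k := by
        intro i hi
        rw [if_pos hi, Finset.card_univ]
        simp [Fintype.card_fun, Fintype.card_prod, mul_comm]
      rw [Finset.prod_eq_pow_card hval, hZ]
    have e2 : ∏ i ∈ Zᶜ, (if i ∈ Z then (Finset.univ : Finset (Fin k → Fin n × Bool)) else {c0}).card = 1 := by
      apply Finset.prod_eq_one
      intro i hi
      rw [Finset.mem_compl] at hi
      simp [hi]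
    rw [e1, e2, mul_one]
  calc (Finset.univ.filter fun Φ : KFormula n m k =>
        ∀ i ∈ I, clauseVars Φ i ⊆ varsOf Φ Z ∪ Y).card
      ≤ (W.biUnion box).card := Finset.card_le_card hsub
    _ ≤ ∑ w ∈ W, (box w).card := Finset.card_biUnion_le
    _ ≤ ∑ _w ∈ W, ((((k * a + b) * 2) ^ k) ^ a * ((n * 2) ^ k) ^ (m - (a + a))) :=
        Finset.sum_le_sum fun w _ => hboxcard w
    _ = W.card * ((((k * a + b) * 2) ^ k) ^ a * ((n * 2) ^ k) ^ (m - (a + a))) := by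
        rw [Finset.sum_const, smul_eq_mul]
    _ ≤ ((n * 2) ^ k) ^ a * ((((k * a + b) * 2) ^ k) ^ a * ((n * 2) ^ k) ^ (m - (a + a))) :=
        Nat.mul_le_mul_right _ hWcard
    _ = ((n * 2) ^ k) ^ (m - a) * ((k * a + b) * 2) ^ (k * a) := by
        have h3 : a + (m - (a + a)) = m - a := by omega
        calc ((n * 2) ^ k) ^ a * ((((k * a + b) * 2) ^ k) ^ a * ((n * 2) ^ k) ^ (m - (a + a)))
            = (((n * 2) ^ k) ^ a * ((n * 2) ^ k) ^ (m - (a + a))) * (((k * a + b) * 2) ^ k) ^ a := by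
              ring
          _ = ((n * 2) ^ k) ^ (m - a) * ((k * a + b) * 2) ^ (k * a) := by
              rw [← pow_add, h3, pow_mul]

lemma choose_le_pow_real (m a : ℕ) (ha : 0 < a) :
    (m.choose a : ℝ) ≤ (Real.exp 1 * m / a) ^ a := by
  have hfact : ((a : ℝ)) ^ a ≤ Real.exp 1 ^ a * (a.factorial : ℝ) := by
    have h1 : ((a : ℝ)) ^ a / (a.factorial : ℝ) ≤ Real.exp a :=
      Real.pow_div_factorial_le_exp (x := (a : ℝ)) (by positivity) a
    have h2 : Real.exp (a : ℝ) = Real.exp 1 ^ a := by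
      rw [← Real.exp_nat_mul, mul_one]
    have h3 : (0 : ℝ) < (a.factorial : ℝ) := by positivity
    rw [div_le_iff₀ h3] at h1
    rw [h2] at h1
    linarith
  have h1 : (m.choose a : ℝ) ≤ (m : ℝ) ^ a / (a.factorial : ℝ) := Nat.choose_le_pow_div a m
  refine h1.trans ?_
  rw [div_pow, mul_pow]
  rw [div_le_div_iff₀ (by positivity) (by positivity)]
  calc (m : ℝ) ^ a * (a : ℝ) ^ a ≤ (m : ℝ) ^ a * (Real.exp 1 ^ a * (a.factorial : ℝ)) := by
        apply mul_le_mul_of_nonneg_left hfact (by positivity)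
    _ = Real.exp 1 ^ a * (m : ℝ) ^ a * (a.factorial : ℝ) := by ring


lemma ratio_step {n m k a b N : ℕ} (hn : 0 < n) (ham : a ≤ m)
    (hN : N ≤ (m.choose a * (n.choose b * m.choose a)) *
        (((n * 2) ^ k) ^ (m - a) * ((k * a + b) * 2) ^ (k * a))) :
    (N : ℝ) / ((((n : ℝ) * 2) ^ k) ^ m)
      ≤ (m.choose a : ℝ) * (n.choose b) * (m.choose a)
          * (((k * a + b : ℕ) : ℝ) / (n : ℝ)) ^ (k * a) := by
  have htotpos : (0 : ℝ) < (((n : ℝ) * 2) ^ k) ^ m := by positivity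
  rw [div_le_iff₀ htotpos]
  have hkm : k * (m - a) + k * a = k * m := by
    have h : m - a + a = m := by omega
    calc k * (m - a) + k * a = k * ((m - a) + a) := by ring
      _ = k * m := by rw [h]
  have hne : (n : ℝ) ≠ 0 := by positivity
  calc (N : ℝ) ≤ ((m.choose a * (n.choose b * m.choose a)) *
        (((n * 2) ^ k) ^ (m - a) * ((k * a + b) * 2) ^ (k * a)) : ℕ) := by exact_mod_cast hN
    _ = ((m.choose a : ℝ) * (n.choose b) * (m.choose a)) *
          ((((n : ℝ) * 2) ^ k) ^ (m - a) * (((k * a + b : ℕ) : ℝ) * 2) ^ (k * a)) := by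
        push_cast
        ring
    _ = (m.choose a : ℝ) * (n.choose b) * (m.choose a)
          * (((k * a + b : ℕ) : ℝ) / (n : ℝ)) ^ (k * a) * (((n : ℝ) * 2) ^ k) ^ m := by
        have hXa : ((((n : ℝ) * 2) ^ k) ^ a) = ((n : ℝ) * 2) ^ (k * a) := (pow_mul _ k a).symm
        have hsplit : ((((n : ℝ) * 2) ^ k) ^ m)
            = ((((n : ℝ) * 2) ^ k) ^ (m - a)) * (((n : ℝ) * 2) ^ (k * a)) := by
          rw [← hXa, ← pow_add]
          congr 1
          omega
        have hmain : ((((k * a + b : ℕ) : ℝ)) * 2) ^ (k * a)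
            = (((k * a + b : ℕ) : ℝ) / (n : ℝ)) ^ (k * a) * ((n : ℝ) * 2) ^ (k * a) := by
          rw [← mul_pow]
          congr 1
          field_simp
        rw [hsplit, hmain]
        ring

set_option maxHeartbeats 2000000 in
lemma prob_bound {n m k a b : ℕ} (hn : 0 < n) :
    probOf n m k (fun Φ =>
        ∃ (Z I : Finset (Fin m)) (Y : Finset (Fin n)),
          Z.card = a ∧ Y.card = b ∧ I.card = a ∧ Disjoint I Z ∧
          ∀ i ∈ I, clauseVars Φ i ⊆ varsOf Φ Z ∪ Y)
      ≤ (m.choose a : ℝ) * (n.choose b) * (m.choose a)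
          * (((k * a + b : ℕ) : ℝ) / (n : ℝ)) ^ (k * a) := by
  classical
  by_cases h2a : a + a ≤ m
  · -- main case
    set T : Finset (Finset (Fin m) × Finset (Fin n) × Finset (Fin m)) :=
      ((Finset.univ.powersetCard a) ×ˢ ((Finset.univ.powersetCard b) ×ˢ (Finset.univ.powersetCard a))).filter
        (fun p => Disjoint p.2.2 p.1) with hT
    have hsub : (Finset.univ.filter fun Φ : KFormula n m k =>
        ∃ (Z I : Finset (Fin m)) (Y : Finset (Fin n)),
          Z.card = a ∧ Y.card = b ∧ I.card = a ∧ Disjoint I Z ∧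
          ∀ i ∈ I, clauseVars Φ i ⊆ varsOf Φ Z ∪ Y)
        ⊆ T.biUnion (fun p => Finset.univ.filter fun Φ : KFormula n m k =>
            ∀ i ∈ p.2.2, clauseVars Φ i ⊆ varsOf Φ p.1 ∪ p.2.1) := by
      intro Φ hΦ
      rw [Finset.mem_filter] at hΦ
      obtain ⟨-, Z, I, Y, hZ, hY, hI, hdisj, hcond⟩ := hΦ
      refine Finset.mem_biUnion.2 ⟨(Z, Y, I), ?_, ?_⟩
      · rw [hT, Finset.mem_filter]
        refine ⟨?_, hdisj⟩
        rw [Finset.mem_product]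
        refine ⟨Finset.mem_powersetCard.2 ⟨Finset.subset_univ _, hZ⟩, ?_⟩
        rw [Finset.mem_product]
        exact ⟨Finset.mem_powersetCard.2 ⟨Finset.subset_univ _, hY⟩,
          Finset.mem_powersetCard.2 ⟨Finset.subset_univ _, hI⟩⟩
      · rw [Finset.mem_filter]
        exact ⟨Finset.mem_univ _, hcond⟩
    have hTcard : T.card ≤ m.choose a * (n.choose b * m.choose a) := by
      have h1 : T.card ≤ (((Finset.univ.powersetCard a) ×ˢ ((Finset.univ.powersetCard b) ×ˢ (Finset.univ.powersetCard a))) :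
          Finset (Finset (Fin m) × Finset (Fin n) × Finset (Fin m))).card := by
        rw [hT]
        exact Finset.card_le_card (Finset.filter_subset _ _)
      refine h1.trans (le_of_eq ?_)
      rw [Finset.card_product, Finset.card_product, Finset.card_powersetCard]
      simp
    have hcount : ((Finset.univ.filter fun Φ : KFormula n m k =>
        ∃ (Z I : Finset (Fin m)) (Y : Finset (Fin n)),
          Z.card = a ∧ Y.card = b ∧ I.card = a ∧ Disjoint I Z ∧
          ∀ i ∈ I, clauseVars Φ i ⊆ varsOf Φ Z ∪ Y)).card
        ≤ (m.choose a * (n.choose b * m.choose a)) *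
            (((n * 2) ^ k) ^ (m - a) * ((k * a + b) * 2) ^ (k * a)) := by
      calc ((Finset.univ.filter fun Φ : KFormula n m k =>
          ∃ (Z I : Finset (Fin m)) (Y : Finset (Fin n)),
            Z.card = a ∧ Y.card = b ∧ I.card = a ∧ Disjoint I Z ∧
            ∀ i ∈ I, clauseVars Φ i ⊆ varsOf Φ Z ∪ Y)).card
          ≤ (T.biUnion (fun p => Finset.univ.filter fun Φ : KFormula n m k =>
              ∀ i ∈ p.2.2, clauseVars Φ i ⊆ varsOf Φ p.1 ∪ p.2.1)).card :=
            Finset.card_le_card hsub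
        _ ≤ ∑ p ∈ T, ((Finset.univ.filter fun Φ : KFormula n m k =>
              ∀ i ∈ p.2.2, clauseVars Φ i ⊆ varsOf Φ p.1 ∪ p.2.1)).card :=
            Finset.card_biUnion_le
        _ ≤ ∑ _p ∈ T, (((n * 2) ^ k) ^ (m - a) * ((k * a + b) * 2) ^ (k * a)) := by
            refine Finset.sum_le_sum fun p hp => ?_
            rw [hT, Finset.mem_filter] at hp
            obtain ⟨hp1, hdisj⟩ := hp
            rw [Finset.mem_product] at hp1
            obtain ⟨hZ, hp2⟩ := hp1
            rw [Finset.mem_product] at hp2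
            obtain ⟨hY, hI⟩ := hp2
            exact count_bound hn p.1 p.2.2 p.2.1 hdisj
              (Finset.mem_powersetCard.1 hZ).2 (Finset.mem_powersetCard.1 hI).2
              (Finset.mem_powersetCard.1 hY).2
        _ = T.card * (((n * 2) ^ k) ^ (m - a) * ((k * a + b) * 2) ^ (k * a)) := by
            rw [Finset.sum_const, smul_eq_mul]
        _ ≤ (m.choose a * (n.choose b * m.choose a)) *
              (((n * 2) ^ k) ^ (m - a) * ((k * a + b) * 2) ^ (k * a)) :=
            Nat.mul_le_mul_right _ hTcard
    have htotal : ((Fintype.card (KFormula n m k)) : ℝ) = (((n : ℝ) * 2) ^ k) ^ m := by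
      have h : Fintype.card (KFormula n m k) = ((n * 2) ^ k) ^ m := by
        simp [Fintype.card_fun, Fintype.card_prod, Fintype.card_fin]
      rw [h]
      push_cast
      ring
    rw [probOf, htotal]
    apply ratio_step hn (by omega)
    convert hcount using 3
  · -- degenerate case: event impossible
    have hnot : ∀ Φ : KFormula n m k, ¬ (∃ (Z I : Finset (Fin m)) (Y : Finset (Fin n)),
        Z.card = a ∧ Y.card = b ∧ I.card = a ∧ Disjoint I Z ∧
        ∀ i ∈ I, clauseVars Φ i ⊆ varsOf Φ Z ∪ Y) := by
      rintro Φ ⟨Z, I, Y, hZ, hY, hI, hdisj, -⟩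
      apply h2a
      have h1 : (I ∪ Z).card = a + a := by
        rw [Finset.card_union_of_disjoint hdisj, hI, hZ]
      have h2 : (I ∪ Z).card ≤ m := by
        simpa using Finset.card_le_card (Finset.subset_univ (I ∪ Z))
      omega
    rw [probOf]
    have hrhs : (0:ℝ) ≤ (m.choose a : ℝ) * (n.choose b) * (m.choose a)
        * (((k * a + b : ℕ) : ℝ) / (n : ℝ)) ^ (k * a) := by positivity
    convert_to ((0:ℝ) / (Fintype.card (KFormula n m k) : ℝ))
        ≤ (m.choose a : ℝ) * (n.choose b) * (m.choose a)
          * (((k * a + b : ℕ) : ℝ) / (n : ℝ)) ^ (k * a)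
    · congr 1
      norm_cast
      rw [Finset.card_eq_zero]
      simp only [Finset.eq_empty_iff_forall_notMem, Finset.mem_filter]
      exact fun Φ h => hnot Φ h.2
    · rw [zero_div]
      exact hrhs

lemma log_one_add_le {t : ℝ} (h0 : 0 ≤ t) (h1 : t ≤ 1) : Real.log (1+t) ≤ t - t^2/6 := by
  have hu : 0 ≤ t - t^2/6 := by nlinarith
  have h2 : 1 + (t - t^2/6)/2 ≤ Real.exp ((t - t^2/6)/2) := by
    have := Real.add_one_le_exp ((t - t^2/6)/2); linarith
  have h3 : (1 + (t - t^2/6)/2)^2 ≤ Real.exp ((t - t^2/6)/2)^2 :=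
    pow_le_pow_left₀ (by linarith) h2 2
  have h4 : Real.exp ((t - t^2/6)/2)^2 = Real.exp (t - t^2/6) := by
    rw [← Real.exp_nat_mul]
    congr 1
    push_cast
    ring
  have hq : (0:ℝ) ≤ t^2*(12 - 12*t + t^2) := mul_nonneg (sq_nonneg t) (by nlinarith)
  have h5 : 1 + t ≤ (1 + (t - t^2/6)/2)^2 := by nlinarith [hq]
  have h6 : 1 + t ≤ Real.exp (t - t^2/6) := by
    calc 1 + t ≤ (1 + (t - t^2/6)/2)^2 := h5
      _ ≤ Real.exp ((t - t^2/6)/2)^2 := h3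
      _ = Real.exp (t - t^2/6) := h4
  rw [Real.log_le_iff_le_exp (by linarith)]
  exact h6

lemma t_log_t {t : ℝ} (h0 : 0 < t) : t - 1 ≤ t * Real.log t := by
  have h := Real.log_le_sub_one_of_pos (inv_pos.2 h0)
  rw [Real.log_inv] at h
  have h2 := mul_le_mul_of_nonneg_left h h0.le
  have h3 : t * t⁻¹ = 1 := mul_inv_cancel₀ h0.ne'
  nlinarith [h2, h3]


private lemma final_arith (K lam E LK L2 LL2 Lt L1t μ t : ℝ)
    (hμdef : μ = K - lam) (hμt : μ = t * K) (h4 : 4 < lam) (hK : 1000000 ≤ K)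
    (ht0 : 0 < t) (ht1 : t < 1) (hLK : 0 ≤ LK) (hLL2 : LL2 ≤ 0) (hE : E ≤ -(3*LK))
    (hnum : 2 + 6*LK ≤ K/6) (hL1t : L1t ≤ t - t^2/6) (htLt : t - 1 ≤ t*Lt) :
    2*(1 + K*L2 + LL2 - E) + μ*(1 - (E + (LK + Lt))) + K*(E + (LK + L1t))
      ≤ 2*K*(L2 + 1) + lam/2*E := by
  have hK0 : (0:ℝ) < K := by linarith
  have hA1 : K*L1t ≤ K*(t - t^2/6) := mul_le_mul_of_nonneg_left hL1t hK0.le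
  have hA2 : μ - K ≤ μ * Lt := by
    have h := mul_le_mul_of_nonneg_left htLt hK0.le
    have h2 : K*(t*Lt) = μ * Lt := by rw [hμt]; ring
    have h3 : K*(t-1) = μ - K := by rw [hμt]; ring
    linarith [h, h2.le, h2.ge, h3.le, h3.ge]
  have hA3 : (lam/2 - 2) * E ≤ (lam/2 - 2) * (-(3*LK)) :=
    mul_le_mul_of_nonneg_left hE (by linarith)
  have hA4 : K*LK - μ*LK - (3/2)*(lam*LK) ≤ 0 := by
    have h : K*LK - μ*LK - (3/2)*(lam*LK) = -(lam/2)*LK := by rw [hμdef]; ring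
    rw [h]
    have h2 : 0 ≤ (lam/2)*LK := mul_nonneg (by linarith) hLK
    linarith
  have hA5 : 2 + 6*LK ≤ K - K*t + K*t^2/6 := by
    have h16 : (1:ℝ)/6 ≤ 1 - t + t^2/6 := by nlinarith [ht1.le]
    have h := mul_le_mul_of_nonneg_left h16 hK0.le
    nlinarith [h, hnum]
  have heq1 : μ * E = K * E - lam * E := by rw [hμdef]; ring
  have heq2 : μ * LK = K * LK - lam * LK := by rw [hμdef]; ring
  nlinarith [hA1, hA2, hA3, hA4, hA5, hLL2, heq1, heq2]

lemma perUnit {k : ℕ} {lam eps : ℝ} (hk : 1000000 ≤ (k:ℝ)) (h4 : 4 < lam) (hlk : lam < (k:ℝ))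
    (he : 0 < eps) (hek : eps ≤ ((k:ℝ)^3)⁻¹) :
    (Real.exp 1 * (2 ^ k * Real.log 2) / eps) ^ 2
      * (Real.exp 1 / (eps * ((k:ℝ) - lam))) ^ ((k:ℝ) - lam)
      * (eps * (2 * (k:ℝ) - lam)) ^ k
    ≤ (2 * Real.exp 1) ^ (2 * k) * eps ^ (lam / 2) := by
  have hK0 : (0:ℝ) < (k:ℝ) := by linarith
  have hK1 : (1:ℝ) ≤ (k:ℝ) := by linarith
  have hμ0 : (0:ℝ) < (k:ℝ) - lam := by linarith
  have hL2 : (0:ℝ) < Real.log 2 := Real.log_pos (by norm_num)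
  have h2Kl : (0:ℝ) < 2 * (k:ℝ) - lam := by linarith
  have hc1 : (0:ℝ) < Real.exp 1 * (2 ^ k * Real.log 2) / eps := by positivity
  have hc2 : (0:ℝ) < Real.exp 1 / (eps * ((k:ℝ) - lam)) := by positivity
  have hc3 : (0:ℝ) < eps * (2 * (k:ℝ) - lam) := by positivity
  have hrhs : (0:ℝ) < (2 * Real.exp 1) ^ (2 * k) * eps ^ (lam / 2) := by positivity
  rw [← Real.log_le_log_iff (by positivity) hrhs]
  -- abbreviations
  set μ : ℝ := (k:ℝ) - lam with hμdef
  set t : ℝ := μ / (k:ℝ) with htdef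
  have ht0 : 0 < t := by positivity
  have hμt : μ = t * (k:ℝ) := by
    rw [htdef]; field_simp
  have ht1 : t < 1 := by
    rw [htdef, div_lt_one hK0]
    have : 0 < lam := by linarith
    linarith [hμdef]
  -- log expansions
  have e1 : Real.log ((Real.exp 1 * (2 ^ k * Real.log 2) / eps) ^ 2
        * (Real.exp 1 / (eps * μ)) ^ μ * (eps * (2 * (k:ℝ) - lam)) ^ k)
      = 2 * Real.log (Real.exp 1 * (2 ^ k * Real.log 2) / eps)
        + μ * Real.log (Real.exp 1 / (eps * μ))
        + (k:ℝ) * Real.log (eps * (2 * (k:ℝ) - lam)) := by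
    rw [Real.log_mul (by positivity) (by positivity),
      Real.log_mul (by positivity) (by positivity),
      Real.log_pow, Real.log_rpow hc2, Real.log_pow]
    push_cast
    ring
  have e2 : Real.log (Real.exp 1 * (2 ^ k * Real.log 2) / eps)
      = 1 + (k:ℝ) * Real.log 2 + Real.log (Real.log 2) - Real.log eps := by
    rw [Real.log_div (by positivity) he.ne', Real.log_mul (by positivity) (by positivity),
      Real.log_mul (by positivity) hL2.ne', Real.log_pow, Real.log_exp]
    ring
  have e3 : Real.log (Real.exp 1 / (eps * μ))
      = 1 - (Real.log eps + Real.log μ) := by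
    rw [Real.log_div (by positivity) (by positivity), Real.log_mul he.ne' hμ0.ne',
      Real.log_exp]
  have e4 : Real.log (eps * (2 * (k:ℝ) - lam)) = Real.log eps + Real.log (2 * (k:ℝ) - lam) :=
    Real.log_mul he.ne' h2Kl.ne'
  have e5 : Real.log ((2 * Real.exp 1) ^ (2 * k) * eps ^ (lam / 2))
      = (2 * (k:ℝ)) * (Real.log 2 + 1) + (lam / 2) * Real.log eps := by
    rw [Real.log_mul (by positivity) (by positivity), Real.log_pow,
      Real.log_mul (by norm_num) (Real.exp_pos 1).ne', Real.log_exp, Real.log_rpow he]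
    push_cast
    ring
  rw [e1, e2, e3, e4, e5]
  -- more log identities
  have hlogμ : Real.log μ = Real.log (k:ℝ) + Real.log t := by
    rw [hμt, Real.log_mul ht0.ne' hK0.ne']
    ring
  have h2kl_eq : 2 * (k:ℝ) - lam = (k:ℝ) * (1 + t) := by
    have h := hμt
    rw [hμdef] at h
    linear_combination h
  have hlog2Kl : Real.log (2 * (k:ℝ) - lam) = Real.log (k:ℝ) + Real.log (1+t) := by
    rw [h2kl_eq, Real.log_mul hK0.ne' (by linarith)]
  rw [hlogμ, hlog2Kl]
  -- analytic facts
  have hLK : 0 ≤ Real.log (k:ℝ) := Real.log_nonneg hK1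
  have hLL2 : Real.log (Real.log 2) ≤ 0 := by
    apply Real.log_nonpos hL2.le
    have := Real.log_le_sub_one_of_pos (by norm_num : (0:ℝ) < 2)
    linarith
  have hE : Real.log eps ≤ -(3 * Real.log (k:ℝ)) := by
    have h := (Real.log_le_log_iff he (by positivity)).mpr hek
    rw [Real.log_inv, Real.log_pow] at h
    push_cast at h
    linarith
  have hs : Real.sqrt (k:ℝ) * Real.sqrt (k:ℝ) = (k:ℝ) := Real.mul_self_sqrt hK0.le
  have hs1000 : (1000:ℝ) ≤ Real.sqrt (k:ℝ) := by
    rw [Real.le_sqrt (by norm_num) hK0.le]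
    nlinarith [hk]
  have hsqrt : Real.log (k:ℝ) ≤ 2 * Real.sqrt (k:ℝ) := by
    have h1 : Real.log (Real.sqrt (k:ℝ)) = Real.log (k:ℝ) / 2 := Real.log_sqrt hK0.le
    have h2 : Real.log (Real.sqrt (k:ℝ)) ≤ Real.sqrt (k:ℝ) - 1 :=
      Real.log_le_sub_one_of_pos (by positivity)
    linarith
  have hnum : 2 + 6 * Real.log (k:ℝ) ≤ (k:ℝ)/6 := by
    have hsnn : (0:ℝ) ≤ Real.sqrt (k:ℝ) := Real.sqrt_nonneg _
    have h1 : 1000 * Real.sqrt (k:ℝ) ≤ Real.sqrt (k:ℝ) * Real.sqrt (k:ℝ) :=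
      mul_le_mul_of_nonneg_right hs1000 hsnn
    linarith [hs, hsqrt, hs1000, h1]
  have hlog1t : Real.log (1+t) ≤ t - t^2/6 := log_one_add_le ht0.le ht1.le
  have htLt : t - 1 ≤ t * Real.log t := t_log_t ht0
  exact final_arith (k:ℝ) lam (Real.log eps) (Real.log (k:ℝ)) (Real.log 2)
    (Real.log (Real.log 2)) (Real.log t) (Real.log (1+t)) μ t
    hμdef hμt h4 hk ht0 ht1 hLK hLL2 hE hnum hlog1t htLt

lemma analytic_bound {n m k a b : ℕ} {eps lam : ℝ}
    (hk : 1000000 ≤ (k:ℝ)) (heps : 0 < eps) (h4 : 4 < lam) (hlk : lam < (k:ℝ))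
    (hek : eps ≤ ((k:ℝ)^3)⁻¹) (hm : (m:ℝ)/(n:ℝ) ≤ 2^k * Real.log 2)
    (ha : 0 < a) (hb : 0 < b) (hn : 0 < n)
    (haε : (a:ℝ) = eps * n) (hbε : (b:ℝ) = eps * ((k:ℝ) - lam) * n) :
    (m.choose a : ℝ) * (n.choose b) * (m.choose a) * (((k*a+b : ℕ):ℝ)/(n:ℝ))^(k*a)
      ≤ ((2*Real.exp 1)^(2*k) * eps^(lam/2))^a := by
  have hn' : (0:ℝ) < (n:ℝ) := by exact_mod_cast hn
  have ha' : (0:ℝ) < (a:ℝ) := by exact_mod_cast ha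
  have hμ0 : (0:ℝ) < (k:ℝ) - lam := by linarith
  have hL2 : (0:ℝ) < Real.log 2 := Real.log_pos (by norm_num)
  have h2Kl : (0:ℝ) < 2 * (k:ℝ) - lam := by linarith
  set c1 : ℝ := Real.exp 1 * (2 ^ k * Real.log 2) / eps with hc1def
  set c2 : ℝ := Real.exp 1 / (eps * ((k:ℝ) - lam)) with hc2def
  set c3 : ℝ := eps * (2 * (k:ℝ) - lam) with hc3def
  have hc1 : (0:ℝ) < c1 := by rw [hc1def]; positivity
  have hc2 : (0:ℝ) < c2 := by rw [hc2def]; positivity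
  have hc3 : (0:ℝ) < c3 := by rw [hc3def]; positivity
  have hCa : (m.choose a : ℝ) ≤ c1 ^ a := by
    refine (choose_le_pow_real m a ha).trans (pow_le_pow_left₀ (by positivity) ?_ a)
    have h1 : (m:ℝ)/(a:ℝ) ≤ (2^k * Real.log 2)/eps := by
      rw [haε]
      calc (m:ℝ)/(eps * n) = ((m:ℝ)/n)/eps := by rw [div_div, mul_comm]
        _ ≤ (2^k * Real.log 2)/eps := by gcongr
    calc Real.exp 1 * (m:ℝ) / (a:ℝ) = Real.exp 1 * ((m:ℝ)/(a:ℝ)) := by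
          rw [mul_div_assoc]
      _ ≤ Real.exp 1 * ((2^k * Real.log 2)/eps) := by
          exact mul_le_mul_of_nonneg_left h1 (Real.exp_pos 1).le
      _ = c1 := by rw [hc1def]; ring
  have hCb : (n.choose b : ℝ) ≤ c2 ^ b := by
    refine (choose_le_pow_real n b hb).trans (le_of_eq ?_)
    congr 1
    rw [hbε, hc2def]
    field_simp
  have hc3eq : (((k*a+b : ℕ):ℝ)/(n:ℝ)) = c3 := by
    push_cast
    rw [haε, hbε, hc3def]
    field_simp
    ring
  have hc2b : c2 ^ b = (c2 ^ ((k:ℝ) - lam)) ^ a := by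
    have hbr : ((b:ℕ):ℝ) = ((k:ℝ) - lam) * ((a:ℕ):ℝ) := by rw [haε, hbε]; ring
    rw [← Real.rpow_natCast c2 b, hbr, Real.rpow_mul hc2.le, Real.rpow_natCast]
  have hCb' : (n.choose b : ℝ) ≤ (c2 ^ ((k:ℝ) - lam)) ^ a := hc2b ▸ hCb
  have hr2 : (0:ℝ) ≤ c2 ^ ((k:ℝ) - lam) := Real.rpow_nonneg hc2.le _
  calc (m.choose a : ℝ) * (n.choose b) * (m.choose a) * (((k*a+b : ℕ):ℝ)/(n:ℝ))^(k*a)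
      = (m.choose a : ℝ) * (n.choose b) * (m.choose a) * ((c3^k)^a) := by
        rw [hc3eq, pow_mul]
    _ ≤ (c1^a) * ((c2 ^ ((k:ℝ) - lam))^a) * (c1^a) * ((c3^k)^a) := by
        refine mul_le_mul_of_nonneg_right ?_ (by positivity)
        refine mul_le_mul (mul_le_mul hCa hCb' (by positivity) (by positivity)) hCa
          (by positivity) (by positivity)
    _ = (c1 * (c2 ^ ((k:ℝ) - lam)) * c1 * (c3^k))^a := by
        rw [← mul_pow, ← mul_pow, ← mul_pow]
    _ = (c1^2 * (c2 ^ ((k:ℝ) - lam)) * (c3^k))^a := by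
        congr 1
        ring
    _ ≤ ((2*Real.exp 1)^(2*k) * eps^(lam/2))^a := by
        apply pow_le_pow_left₀ (by positivity)
        exact perUnit hk h4 hlk heps hek

/-- **Union bound (2.5) in Lemma 2.4.** There is `k₀ > 0` such that for all `k ≥ k₀`,
reals `ε > 0`, `4 < λ ≤ k` with `ε ≤ k⁻³`, and `n, m` with `m/n ≤ 2^k ln 2` such that
`εn` and `ε(k−λ)n` are positive integers, the probability that there exist `Z ⊆ [m]` with
`|Z| = εn`, `Y ⊆ V` with `|Y| = ε(k−λ)n`, and `I ⊆ [m] ∖ Z` with `|I| = εn` such that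
`N(Φ_i) ⊆ N(Φ_Z) ∪ Y` for all `i ∈ I`, is at most `((2e)^{2k} ε^{λ/2})^{εn}`. -/
theorem prob_exists_core_structure :
    ∃ k0 : ℕ, 0 < k0 ∧ ∀ k : ℕ, k0 ≤ k →
      ∀ ε lam : ℝ, 0 < ε → 4 < lam → lam ≤ k → ε ≤ ((k : ℝ) ^ 3)⁻¹ →
        ∀ n m a b : ℕ, (m : ℝ) / n ≤ 2 ^ k * Real.log 2 →
          0 < a → 0 < b → (a : ℝ) = ε * n → (b : ℝ) = ε * ((k : ℝ) - lam) * n →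
          probOf n m k (fun Φ =>
              ∃ (Z I : Finset (Fin m)) (Y : Finset (Fin n)),
                Z.card = a ∧ Y.card = b ∧ I.card = a ∧ Disjoint I Z ∧
                ∀ i ∈ I, clauseVars Φ i ⊆ varsOf Φ Z ∪ Y)
            ≤ ((2 * Real.exp 1) ^ (2 * k) * ε ^ (lam / 2)) ^ a := by
  refine ⟨1000000, by norm_num, ?_⟩
  intro k hk ε lam hε h4 hlamk hεk n m a b hm ha hb haε hbε
  have hn : 0 < n := by
    by_contra h
    push_neg at h
    have hn0 : n = 0 := by omega
    rw [hn0] at haε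
    have ha' : (0:ℝ) < (a:ℝ) := by exact_mod_cast ha
    simp at haε
    linarith
  have hn' : (0:ℝ) < (n:ℝ) := by exact_mod_cast hn
  have hk' : (1000000:ℝ) ≤ (k:ℝ) := by exact_mod_cast hk
  have hlk : lam < (k:ℝ) := by
    have hb' : (0:ℝ) < (b:ℝ) := by exact_mod_cast hb
    rw [hbε] at hb'
    by_contra h
    push_neg at h
    nlinarith [hε, hn']
  exact (prob_bound hn).trans
    (analytic_bound hk' hε h4 hlk hεk hm ha hb hn haε hbε)
end
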